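/- arXiv:2111.01010 — 2 statements merged into one kernel-verified Lean document; each statement's English description precedes it below -/
import Mathlib

section
/- The code C_{(∞,2,∞)} = {{2,3,4,5}, {1,2,3}, {1,3,4}, {1,4,5}, {1,3}, {1,4}, {2,3}, {3,4}, {4,5}, {3}, {4}, ∅} on [5] has embedding dimension vector (∞, 2, ∞): it has no open convex realization in ℝ^d for any d (hence also no non-degenerate convex realization in any dimension), while it has a closed convex realization in ℝ^2 and no closed convex realization in ℝ^1. -/
open Set

noncomputable section

/-- Euclidean space `ℝ^d`. -/
abbrev Euc (d : ℕ) : Type := EuclideanSpace ℝ (Fin d)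

/-- The code of a collection of sets `U = (U 0, …, U (n-1))` in `ℝ^d`. -/
def codeOf {n d : ℕ} (U : Fin n → Set (Euc d)) : Set (Finset (Fin n)) :=
  {σ | ∃ p : Euc d, ∀ i : Fin n, p ∈ U i ↔ i ∈ σ}

/-- `U` is an open convex realization of the code `C`. -/
def IsOpenReal {n d : ℕ} (C : Set (Finset (Fin n))) (U : Fin n → Set (Euc d)) : Prop :=
  (∀ i, Convex ℝ (U i)) ∧ (∀ i, IsOpen (U i)) ∧ codeOf U = C

/-- `X` is a closed convex realization of the code `C`. -/
def IsClosedReal {n d : ℕ} (C : Set (Finset (Fin n))) (X : Fin n → Set (Euc d)) : Prop :=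
  (∀ i, Convex ℝ (X i)) ∧ (∀ i, IsClosed (X i)) ∧ codeOf X = C

/-- `C` has an open convex realization in `ℝ^d`. -/
def HasOpenReal {n : ℕ} (C : Set (Finset (Fin n))) (d : ℕ) : Prop :=
  ∃ U : Fin n → Set (Euc d), IsOpenReal C U

/-- `C` has a closed convex realization in `ℝ^d`. -/
def HasClosedReal {n : ℕ} (C : Set (Finset (Fin n))) (d : ℕ) : Prop :=
  ∃ X : Fin n → Set (Euc d), IsClosedReal C X

/-- `U` is a non-degenerate open convex realization of `C`: it is an open convex
realization and the closures of its sets realize the same code. -/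
def IsNondegOpenReal {n d : ℕ} (C : Set (Finset (Fin n))) (U : Fin n → Set (Euc d)) : Prop :=
  IsOpenReal C U ∧ codeOf (fun i => closure (U i)) = C

/-- `X` is a non-degenerate closed convex realization of `C`: it is a closed convex
realization and the interiors of its sets realize the same code. -/
def IsNondegClosedReal {n d : ℕ} (C : Set (Finset (Fin n))) (X : Fin n → Set (Euc d)) : Prop :=
  IsClosedReal C X ∧ codeOf (fun i => interior (X i)) = C

/-- `C` has a non-degenerate (open or closed) convex realization in `ℝ^d`. -/
def HasNondegReal {n : ℕ} (C : Set (Finset (Fin n))) (d : ℕ) : Prop :=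
  (∃ U : Fin n → Set (Euc d), IsNondegOpenReal C U) ∨
  (∃ X : Fin n → Set (Euc d), IsNondegClosedReal C X)

/-- Open embedding dimension (`⊤` if no open convex realization exists). -/
def odim {n : ℕ} (C : Set (Finset (Fin n))) : ℕ∞ :=
  sInf {e : ℕ∞ | ∃ d : ℕ, e = d ∧ HasOpenReal C d}

/-- Closed embedding dimension (`⊤` if no closed convex realization exists). -/
def cdim {n : ℕ} (C : Set (Finset (Fin n))) : ℕ∞ :=
  sInf {e : ℕ∞ | ∃ d : ℕ, e = d ∧ HasClosedReal C d}

/-- Non-degenerate embedding dimension (`⊤` if no non-degenerate realization exists). -/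
def nddim {n : ℕ} (C : Set (Finset (Fin n))) : ℕ∞ :=
  sInf {e : ℕ∞ | ∃ d : ℕ, e = d ∧ HasNondegReal C d}

/-- The code `C_{(∞,2,∞)}` on `[5]` (indices shifted to `Fin 5`):
`{2345, 123, 134, 145, 13, 14, 23, 34, 45, 3, 4, ∅}`. -/
def codeI2I : Set (Finset (Fin 5)) :=
  {{1, 2, 3, 4}, {0, 1, 2}, {0, 2, 3}, {0, 3, 4}, {0, 2}, {0, 3}, {1, 2}, {2, 3}, {3, 4},
    {2}, {3}, (∅ : Finset (Fin 5))}

-- helper: open convex set absorbs open segments from a member to a closure point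
lemma segOC {S : Set (ℝ × ℝ)} (hc : Convex ℝ S) (ho : IsOpen S) {u z : ℝ × ℝ}
    (hu : u ∈ S) (hz : z ∈ closure S) : openSegment ℝ u z ⊆ S := by
  have := hc.openSegment_interior_closure_subset_interior (by rwa [ho.interior_eq]) hz
  rwa [ho.interior_eq] at this

set_option maxHeartbeats 1000000 in
lemma core2d (V1 V2 V3 V4 V5 : Set (ℝ × ℝ))
    (o2 : IsOpen V2) (o3 : IsOpen V3) (o4 : IsOpen V4) (o5 : IsOpen V5)
    (c1 : Convex ℝ V1) (c2 : Convex ℝ V2) (c3 : Convex ℝ V3) (c4 : Convex ℝ V4)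
    (c5 : Convex ℝ V5)
    (o1 : IsOpen V1)
    (hp1 : ((0:ℝ),(0:ℝ)) ∈ V1) (hp2 : ((0:ℝ),(0:ℝ)) ∈ V2)
    (hp4 : ((0:ℝ),(0:ℝ)) ∉ V4) (hp5 : ((0:ℝ),(0:ℝ)) ∉ V5)
    (hq1 : ((1:ℝ),(0:ℝ)) ∈ V1) (hq4 : ((1:ℝ),(0:ℝ)) ∈ V4) (hq5 : ((1:ℝ),(0:ℝ)) ∈ V5)
    (hq2 : ((1:ℝ),(0:ℝ)) ∉ V2) (hq3 : ((1:ℝ),(0:ℝ)) ∉ V3)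
    (hw2 : ((0:ℝ),(1:ℝ)) ∈ V2) (hw4 : ((0:ℝ),(1:ℝ)) ∈ V4)
    (hp3 : ((0:ℝ),(0:ℝ)) ∈ V3)
    (hcov : V1 ⊆ V3 ∪ V4)
    (hB3 : V2 ∩ V4 ⊆ V3) (hB5 : V2 ∩ V4 ⊆ V5) (hB1 : ∀ z, z ∈ V2 ∩ V4 → z ∉ V1)
    (h35 : V3 ∩ V5 ⊆ V2 ∩ V4) : False := by
  classical
  set p : ℝ × ℝ := ((0:ℝ),(0:ℝ)) with hp_def
  set q : ℝ × ℝ := ((1:ℝ),(0:ℝ)) with hq_def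
  set w : ℝ × ℝ := ((0:ℝ),(1:ℝ)) with hw_def
  set B : Set (ℝ × ℝ) := V2 ∩ V4 with hB_def
  have hwB : w ∈ B := ⟨hw2, hw4⟩
  have hB2 : B ⊆ V2 := inter_subset_left
  have hB4 : B ⊆ V4 := inter_subset_right
  -- the compact convex truncation K of closure B
  set K : Set (ℝ × ℝ) := closure (B ∩ Metric.ball 0 100) with hK_def
  have hKclB : K ⊆ closure B := closure_mono inter_subset_left
  have hwball : w ∈ Metric.ball (0 : ℝ × ℝ) 100 := by
    rw [Metric.mem_ball, dist_zero_right, Prod.norm_def]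
    norm_num
  have hwK : w ∈ K := subset_closure ⟨hwB, hwball⟩
  have hKcompact : IsCompact K :=
    (Metric.isBounded_ball.subset inter_subset_right).isCompact_closure
  have hKconvex : Convex ℝ K := ((c2.inter c4).inter (convex_ball 0 100)).closure
  -- closure inclusions
  have hcl2 : K ⊆ closure V2 := hKclB.trans (closure_mono hB2)
  have hcl3 : K ⊆ closure V3 := hKclB.trans (closure_mono hB3)
  have hcl4 : K ⊆ closure V4 := hKclB.trans (closure_mono hB4)
  have hcl5 : K ⊆ closure V5 := hKclB.trans (closure_mono hB5)
  -- closure B avoids the x-axis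
  have axis : ∀ z ∈ closure B, z.2 ≠ 0 := by
    intro z hz h0
    rcases le_or_gt z.1 0 with hz1 | hz1
    · rcases eq_or_lt_of_le hz1 with hz1e | hz1l
      · -- z = p : but V1 is open, disjoint from B, so p ∉ closure B
        have hzp : z = p := Prod.ext (by simp [hp_def, ← hz1e]) (by simp [hp_def, h0])
        obtain ⟨b, hb1, hbB⟩ :=
          mem_closure_iff.1 (hzp ▸ hz) V1 o1 hp1
        exact hB1 b hbB hb1
      · -- z.1 < 0 : p ∈ openSegment q z ⊆ V5, contradiction
        have ht0 : (0:ℝ) < 1 / (1 - z.1) := div_pos one_pos (by linarith)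
        have ht1 : 1 / (1 - z.1) < 1 := by
          rw [div_lt_one (by linarith)]; linarith
        have : p ∈ openSegment ℝ q z := by
          refine ⟨1 - 1 / (1 - z.1), 1 / (1 - z.1), by linarith, ht0, by ring, ?_⟩
          have h1z : (1:ℝ) - z.1 ≠ 0 := by linarith
          refine Prod.ext ?_ ?_ <;>
            simp only [hp_def, hq_def, Prod.fst_add, Prod.snd_add, Prod.smul_fst,
              Prod.smul_snd, smul_eq_mul]
          · field_simp; ring
          · rw [h0]; ring
        exact hp5 (segOC c5 o5 hq5 (closure_mono hB5 hz) this)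
    · rcases le_or_gt z.1 1 with hz1' | hz1'
      · -- 0 ≤ z.1 ≤ 1 : z ∈ [p,q] ⊆ V1, contradiction with V1 open disjoint from B
        have hzV1 : z ∈ V1 := by
          have hcombo : (1 - z.1) • p + z.1 • q = z := by
            refine Prod.ext ?_ ?_ <;>
              simp only [hp_def, hq_def, Prod.fst_add, Prod.snd_add, Prod.smul_fst,
                Prod.smul_snd, smul_eq_mul]
            · ring
            · rw [h0]; ring
          exact hcombo ▸ c1 hp1 hq1 (by linarith) (by linarith) (by ring)
        obtain ⟨b, hb1, hbB⟩ := mem_closure_iff.1 hz V1 o1 hzV1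
        exact hB1 b hbB hb1
      · -- z.1 > 1 : q ∈ openSegment p z ⊆ V2, contradiction
        have ht0 : (0:ℝ) < 1 / z.1 := div_pos one_pos (by linarith)
        have ht1 : 1 / z.1 < 1 := by rw [div_lt_one (by linarith)]; linarith
        have : q ∈ openSegment ℝ p z := by
          refine ⟨1 - 1 / z.1, 1 / z.1, by linarith, ht0, by ring, ?_⟩
          have h1z : z.1 ≠ 0 := by linarith
          refine Prod.ext ?_ ?_ <;>
            simp only [hp_def, hq_def, Prod.fst_add, Prod.snd_add, Prod.smul_fst,
              Prod.smul_snd, smul_eq_mul]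
          · field_simp; ring
          · rw [h0]; ring
        exact hq2 (segOC c2 o2 hp2 (closure_mono hB2 hz) this)
  -- every point of K has positive height
  have hpos : ∀ z ∈ K, 0 < z.2 := by
    intro z hzK
    rcases lt_trichotomy z.2 0 with hneg | h0 | hposz
    · exfalso
      set t : ℝ := 1 / (1 - z.2) with ht_def
      have ht0 : 0 < t := by rw [ht_def]; exact div_pos one_pos (by linarith)
      have ht1 : t < 1 := by rw [ht_def, div_lt_one (by linarith)]; linarith
      set y : ℝ × ℝ := (1 - t) • w + t • z with hy_def
      have hyK : y ∈ K := hKconvex hwK hzK (by linarith) (by linarith) (by ring)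
      have hy2 : y.2 = 0 := by
        have h1z : (1:ℝ) - z.2 ≠ 0 := by linarith
        simp only [hy_def, hw_def, Prod.snd_add, Prod.smul_snd, smul_eq_mul, ht_def]
        field_simp; ring
      exact axis y (hKclB hyK) hy2
    · exact absurd h0 (axis z (hKclB hzK))
    · exact hposz
  -- minimum of height on K
  obtain ⟨zm, hzmK, hzmmin⟩ := hKcompact.exists_isMinOn ⟨w, hwK⟩ continuous_snd.continuousOn
  have hzmmin' : ∀ z ∈ K, zm.2 ≤ z.2 := fun z hz => hzmmin hz
  set m : ℝ := zm.2 with hm_def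
  have hm0 : 0 < m := hpos zm hzmK
  set a : ℝ := zm.1 with ha_def
  -- bound on K
  have hKbound : ∀ z ∈ K, ‖z‖ ≤ 100 := by
    intro z hz
    have : z ∈ closure (Metric.ball (0 : ℝ×ℝ) 100) := closure_mono inter_subset_right hz
    have := Metric.closure_ball_subset_closedBall this
    rwa [Metric.mem_closedBall, dist_zero_right] at this
  have habs : |a| ≤ 100 := by
    have := hKbound zm hzmK
    rw [Prod.norm_def] at this
    calc |a| = ‖zm.1‖ := rfl
    _ ≤ max ‖zm.1‖ ‖zm.2‖ := le_max_left _ _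
    _ ≤ 100 := this
  have hm100 : m ≤ 100 := by
    have := hKbound zm hzmK
    rw [Prod.norm_def] at this
    calc m ≤ |m| := le_abs_self m
    _ = ‖zm.2‖ := rfl
    _ ≤ max ‖zm.1‖ ‖zm.2‖ := le_max_right _ _
    _ ≤ 100 := this
  -- a point xstar = (s₀, 0) on the segment [p,q] lying in V3 ∩ V4
  have hfcont : Continuous (fun s : ℝ => ((s:ℝ), (0:ℝ))) := continuous_id.prodMk continuous_const
  have hsegV1 : ∀ s : ℝ, 0 ≤ s → s ≤ 1 → ((s:ℝ), (0:ℝ)) ∈ V1 := by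
    intro s h0 h1
    have hcombo : (1 - s) • p + s • q = ((s:ℝ), (0:ℝ)) := by
      refine Prod.ext ?_ ?_ <;>
        simp only [hp_def, hq_def, Prod.fst_add, Prod.snd_add, Prod.smul_fst,
          Prod.smul_snd, smul_eq_mul] <;> ring
    exact hcombo ▸ c1 hp1 hq1 (by linarith) h0 (by ring)
  obtain ⟨s₀, hs₀Icc, hs₀3, hs₀4⟩ :=
    isPreconnected_Icc ((fun s : ℝ => ((s:ℝ), (0:ℝ))) ⁻¹' V3)
      ((fun s : ℝ => ((s:ℝ), (0:ℝ))) ⁻¹' V4) (o3.preimage hfcont) (o4.preimage hfcont)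
      (fun s hs => hcov (hsegV1 s hs.1 hs.2))
      ⟨0, ⟨le_refl 0, zero_le_one⟩, hp3⟩ ⟨1, ⟨zero_le_one, le_refl 1⟩, hq4⟩
  have hs₀3' : ((s₀:ℝ), (0:ℝ)) ∈ V3 := hs₀3
  have hs₀4' : ((s₀:ℝ), (0:ℝ)) ∈ V4 := hs₀4
  have hs₀0 : 0 < s₀ := by
    rcases eq_or_lt_of_le hs₀Icc.1 with h | h
    · exfalso; apply hp4; rw [hp_def]; exact h ▸ hs₀4'
    · exact h
  have hs₀1 : s₀ < 1 := by
    rcases eq_or_lt_of_le hs₀Icc.2 with h | h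
    · exfalso; apply hq3; rw [hq_def]; exact h ▸ hs₀3'
    · exact h
  set xs : ℝ × ℝ := ((s₀:ℝ), (0:ℝ)) with hxs_def
  -- the key inequalities from central projections
  have key : ∀ h' : ℝ, 0 < h' → h' < m → ∀ z ∈ K,
      (h'/m)*a < s₀ + (h'/z.2)*(z.1 - s₀) ∧
      s₀ + (h'/z.2)*(z.1 - s₀) < (h'/m)*a + (1 - h'/m) := by
    intro h' hh0 hhm
    have hhm' : h'/m < 1 := (div_lt_one hm0).mpr hhm
    have hhm0 : 0 < h'/m := div_pos hh0 hm0
    set g : ℝ × ℝ → ℝ := fun z => s₀ + (h'/z.2)*(z.1 - s₀) with hg_def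
    have hgcont : ContinuousOn g K := by
      apply ContinuousOn.add continuousOn_const
      exact (continuousOn_const.div continuous_snd.continuousOn
        (fun z hz => ne_of_gt (hpos z hz))).mul
        (continuous_fst.continuousOn.sub continuousOn_const)
    have hgzm : g zm = s₀ + (h'/m)*(a - s₀) := rfl
    -- generic construction: a point ξ in the image of g at some ζ ∈ K gives the
    -- point y = (ξ, h') on the open segment from xs to ζ, hence y ∈ V3 ∩ V4.
    have hmkY : ∀ ζ ∈ K, ((g ζ, h') : ℝ × ℝ) ∈ V3 ∧ ((g ζ, h') : ℝ × ℝ) ∈ V4 := by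
      intro ζ hζK
      have hζ2 : m ≤ ζ.2 := hzmmin' ζ hζK
      have hζ2' : 0 < ζ.2 := lt_of_lt_of_le hm0 hζ2
      have htζ1 : h'/ζ.2 < 1 := by rw [div_lt_one hζ2']; linarith
      have htζ0 : 0 < h'/ζ.2 := div_pos hh0 hζ2'
      have hyseg : ((g ζ, h') : ℝ × ℝ) ∈ openSegment ℝ xs ζ := by
        refine ⟨1 - h'/ζ.2, h'/ζ.2, by linarith, htζ0, by ring, ?_⟩
        refine Prod.ext ?_ ?_ <;>
          simp only [hxs_def, Prod.fst_add, Prod.snd_add, Prod.smul_fst,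
            Prod.smul_snd, smul_eq_mul, hg_def]
        · ring
        · field_simp; ring
      exact ⟨segOC c3 o3 hs₀3' (hcl3 hζK) hyseg, segOC c4 o4 hs₀4' (hcl4 hζK) hyseg⟩
    have hballY : ∀ ξ : ℝ, |ξ| < 100 → ((ξ, h') : ℝ × ℝ) ∈ Metric.ball (0:ℝ×ℝ) 100 := by
      intro ξ hξ
      rw [Metric.mem_ball, dist_zero_right, Prod.norm_def, max_lt_iff]
      constructor
      · rwa [Real.norm_eq_abs]
      · rw [Real.norm_eq_abs, abs_of_pos hh0]; linarith
    intro z hzK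
    constructor
    · by_contra hle
      push_neg at hle
      have hfp_lt : (h'/m)*a < g zm := by
        rw [hgzm]; nlinarith
      obtain ⟨ζ, hζK, hgζ⟩ := (hKconvex.isPreconnected.intermediate_value hzK hzmK hgcont)
        ⟨hle, le_of_lt hfp_lt⟩
      obtain ⟨hyV3, hyV4⟩ := hmkY ζ hζK
      rw [hgζ] at hyV3 hyV4
      -- y ∈ openSegment p zm ⊆ V2
      have hyseg1 : (((h'/m)*a, h') : ℝ × ℝ) ∈ openSegment ℝ p zm := by
        refine ⟨1 - h'/m, h'/m, by linarith, hhm0, by ring, ?_⟩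
        refine Prod.ext ?_ ?_ <;>
          simp only [hp_def, Prod.fst_add, Prod.snd_add, Prod.smul_fst,
            Prod.smul_snd, smul_eq_mul]
        · ring
        · rw [← hm_def]; field_simp; ring
      have hyV2 : (((h'/m)*a, h') : ℝ × ℝ) ∈ V2 := segOC c2 o2 hp2 (hcl2 hzmK) hyseg1
      have habs' : |(h'/m)*a| < 100 := by
        rw [abs_mul, abs_of_pos hhm0]
        rcases eq_or_lt_of_le (abs_nonneg a) with h | h
        · rw [← h]; norm_num
        · nlinarith
      have hyK : (((h'/m)*a, h') : ℝ × ℝ) ∈ K :=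
        subset_closure ⟨⟨hyV2, hyV4⟩, hballY _ habs'⟩
      have := hzmmin' _ hyK
      simp only [← hm_def] at this
      exact absurd this (by simpa using not_le.mpr hhm)
    · by_contra hge
      push_neg at hge
      have hfq_gt : g zm < (h'/m)*a + (1 - h'/m) := by
        rw [hgzm]; nlinarith
      obtain ⟨ζ, hζK, hgζ⟩ := (hKconvex.isPreconnected.intermediate_value hzmK hzK hgcont)
        ⟨le_of_lt hfq_gt, hge⟩
      obtain ⟨hyV3, hyV4⟩ := hmkY ζ hζK
      rw [hgζ] at hyV3 hyV4
      have hyseg1 : (((h'/m)*a + (1 - h'/m), h') : ℝ × ℝ) ∈ openSegment ℝ q zm := by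
        refine ⟨1 - h'/m, h'/m, by linarith, hhm0, by ring, ?_⟩
        refine Prod.ext ?_ ?_ <;>
          simp only [hq_def, Prod.fst_add, Prod.snd_add, Prod.smul_fst,
            Prod.smul_snd, smul_eq_mul]
        · rw [← ha_def]; ring
        · rw [← hm_def]; field_simp; ring
      have hyV5 : (((h'/m)*a + (1 - h'/m), h') : ℝ × ℝ) ∈ V5 :=
        segOC c5 o5 hq5 (hcl5 hzmK) hyseg1
      have hyB : (((h'/m)*a + (1 - h'/m), h') : ℝ × ℝ) ∈ B := h35 ⟨hyV3, hyV5⟩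
      have habs' : |(h'/m)*a + (1 - h'/m)| < 100 := by
        have h1 : |(h'/m)*a| ≤ (h'/m)*100 := by
          rw [abs_mul, abs_of_pos hhm0]
          nlinarith
        have h2 : |(1 - h'/m)| = 1 - h'/m := abs_of_pos (by linarith)
        calc |(h'/m)*a + (1 - h'/m)| ≤ |(h'/m)*a| + |(1 - h'/m)| := abs_add_le _ _
        _ ≤ (h'/m)*100 + (1 - h'/m) := by rw [h2]; linarith
        _ < 100 := by nlinarith
      have hyK : (((h'/m)*a + (1 - h'/m), h') : ℝ × ℝ) ∈ K :=
        subset_closure ⟨hyB, hballY _ habs'⟩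
      have := hzmmin' _ hyK
      simp only [← hm_def] at this
      exact absurd this (by simpa using not_le.mpr hhm)
  -- from the key inequalities: K lies on a line through (s₀, 0)
  have lineK : ∀ z ∈ K, m * (z.1 - s₀) = z.2 * (a - s₀) := by
    intro z hzK
    have hz2 : 0 < z.2 := hpos z hzK
    set D : ℝ := s₀ + m * ((z.1 - s₀)/z.2) - a with hD_def
    have eD : m*(z.1 - s₀)/z.2 = D - s₀ + a := by rw [hD_def]; ring
    have hD0 : 0 ≤ D := by
      by_contra hDneg
      push_neg at hDneg
      set lam : ℝ := s₀ / (s₀ - D) with hlam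
      have hden : 0 < s₀ - D := by linarith
      have hlam0 : 0 < lam := div_pos hs₀0 hden
      have hlam1 : lam < 1 := by rw [hlam, div_lt_one hden]; linarith
      have hml : 0 < m*lam := mul_pos hm0 hlam0
      have hmlm : m*lam < m := by
        have := mul_lt_mul_of_pos_left hlam1 hm0; linarith
      have hkey := (key (m*lam) hml hmlm z hzK).1
      have e1 : m*lam/m = lam := by field_simp
      have e3 : (m*lam/z.2)*(z.1-s₀) = lam*(m*(z.1-s₀)/z.2) := by
        field_simp
      rw [e1, e3, eD] at hkey
      have e4 : lam*(s₀-D) = s₀ := by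
        rw [hlam]; exact div_mul_cancel₀ s₀ (ne_of_gt hden)
      have e4' : lam*s₀ - lam*D = s₀ := by linear_combination e4
      have e5 : lam*(D-s₀+a) = lam*D - lam*s₀ + lam*a := by ring
      rw [e5] at hkey
      linarith
    have hD1 : D ≤ 0 := by
      by_contra hDpos
      push_neg at hDpos
      set lam : ℝ := (1 - s₀) / ((1 - s₀) + D) with hlam
      have hden : 0 < (1 - s₀) + D := by linarith
      have hlam0 : 0 < lam := div_pos (by linarith) hden
      have hlam1 : lam < 1 := by rw [hlam, div_lt_one hden]; linarith
      have hml : 0 < m*lam := mul_pos hm0 hlam0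
      have hmlm : m*lam < m := by
        have := mul_lt_mul_of_pos_left hlam1 hm0; linarith
      have hkey := (key (m*lam) hml hmlm z hzK).2
      have e1 : m*lam/m = lam := by field_simp
      have e3 : (m*lam/z.2)*(z.1-s₀) = lam*(m*(z.1-s₀)/z.2) := by
        field_simp
      rw [e1, e3, eD] at hkey
      have e4 : lam*((1-s₀)+D) = 1-s₀ := by
        rw [hlam]; exact div_mul_cancel₀ (1-s₀) (ne_of_gt hden)
      have e4' : lam - lam*s₀ + lam*D = 1 - s₀ := by linear_combination e4
      have e5 : lam*(D-s₀+a) = lam*D - lam*s₀ + lam*a := by ring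
      rw [e5] at hkey
      have e6 : m*lam/m = lam := by field_simp
      linarith
    have hD : D = 0 := le_antisymm hD1 hD0
    have : m * ((z.1 - s₀)/z.2) = a - s₀ := by
      rw [hD_def] at hD; linarith
    field_simp at this
    linarith
  -- B is open, so it contains two points at the same height, contradicting lineK
  obtain ⟨ε, hε0, hball⟩ := Metric.isOpen_iff.1 (o2.inter o4) w hwB
  set δ : ℝ := min (ε/2) 1 with hδ_def
  have hδ0 : 0 < δ := lt_min (by linarith) one_pos
  have hδ1 : δ ≤ 1 := min_le_right _ _
  have hδε : δ < ε := lt_of_le_of_lt (min_le_left _ _) (by linarith)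
  have hw' : ((δ, 1) : ℝ × ℝ) ∈ B := by
    apply hball
    rw [Metric.mem_ball, Prod.dist_eq, hw_def]
    simp only [Real.dist_eq]
    rw [max_lt_iff]
    constructor
    · rw [sub_zero, abs_of_pos hδ0]; exact hδε
    · simpa using hε0
  have hw'ball : ((δ, 1) : ℝ × ℝ) ∈ Metric.ball (0:ℝ×ℝ) 100 := by
    rw [Metric.mem_ball, dist_zero_right, Prod.norm_def, max_lt_iff]
    constructor
    · rw [Real.norm_eq_abs, abs_of_pos hδ0]; linarith
    · rw [Real.norm_eq_abs]; norm_num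
  have hw'K : ((δ, 1) : ℝ × ℝ) ∈ K := subset_closure ⟨hw', hw'ball⟩
  have l1 : m * (0 - s₀) = 1 * (a - s₀) := lineK w hwK
  have l2 : m * (δ - s₀) = 1 * (a - s₀) := lineK _ hw'K
  nlinarith [mul_pos hm0 hδ0]


-- The five closed convex sets in the plane
def Y1 : Set (Euc 2) := {z | -2 ≤ z 0 ∧ z 0 ≤ 2 ∧ -1 ≤ z 1 ∧ z 1 ≤ 1/2}
def Y2 : Set (Euc 2) := {z | z 0 ≤ 0 ∧ z 0 + 2 ≤ 2*z 1 ∧ z 1 ≤ z 0 + 2}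
def Y3 : Set (Euc 2) := {z | -5 ≤ z 0 ∧ z 0 ≤ 0 ∧ -5 ≤ z 1 ∧ z 1 ≤ 5}
def Y4 : Set (Euc 2) := {z | 0 ≤ z 0 ∧ z 0 ≤ 5 ∧ -5 ≤ z 1 ∧ z 1 ≤ 5}
def Y5 : Set (Euc 2) := {z | 0 ≤ z 0 ∧ 2 - z 0 ≤ 2*z 1 ∧ z 1 ≤ 2 - z 0}
def YY : Fin 5 → Set (Euc 2) := fun i => [Y1, Y2, Y3, Y4, Y5].get i

def pt (a b : ℝ) : Euc 2 := WithLp.toLp 2 ![a, b]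
lemma pt0 (a b : ℝ) : pt a b 0 = a := rfl
lemma pt1 (a b : ℝ) : pt a b 1 = b := rfl

lemma coord_comb (u v : Euc 2) (s t : ℝ) (i : Fin 2) :
    (s • u + t • v) i = s * u i + t * v i := by
  simp [PiLp.add_apply, PiLp.smul_apply, smul_eq_mul]

lemma convexY1 : Convex ℝ Y1 := by
  rintro u ⟨a1,a2,a3,a4⟩ v ⟨b1,b2,b3,b4⟩ s t hs ht hst
  refine ⟨?_,?_,?_,?_⟩ <;> simp only [coord_comb] <;>
    nlinarith [mul_le_mul_of_nonneg_left a1 hs, mul_le_mul_of_nonneg_left b1 ht,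
      mul_le_mul_of_nonneg_left a2 hs, mul_le_mul_of_nonneg_left b2 ht,
      mul_le_mul_of_nonneg_left a3 hs, mul_le_mul_of_nonneg_left b3 ht,
      mul_le_mul_of_nonneg_left a4 hs, mul_le_mul_of_nonneg_left b4 ht]

lemma convexY2 : Convex ℝ Y2 := by
  rintro u ⟨a1,a2,a3⟩ v ⟨b1,b2,b3⟩ s t hs ht hst
  refine ⟨?_,?_,?_⟩ <;> simp only [coord_comb] <;>
    nlinarith [mul_le_mul_of_nonneg_left a1 hs, mul_le_mul_of_nonneg_left b1 ht,
      mul_le_mul_of_nonneg_left a2 hs, mul_le_mul_of_nonneg_left b2 ht,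
      mul_le_mul_of_nonneg_left a3 hs, mul_le_mul_of_nonneg_left b3 ht]

lemma convexY3 : Convex ℝ Y3 := by
  rintro u ⟨a1,a2,a3,a4⟩ v ⟨b1,b2,b3,b4⟩ s t hs ht hst
  refine ⟨?_,?_,?_,?_⟩ <;> simp only [coord_comb] <;>
    nlinarith [mul_le_mul_of_nonneg_left a1 hs, mul_le_mul_of_nonneg_left b1 ht,
      mul_le_mul_of_nonneg_left a2 hs, mul_le_mul_of_nonneg_left b2 ht,
      mul_le_mul_of_nonneg_left a3 hs, mul_le_mul_of_nonneg_left b3 ht,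
      mul_le_mul_of_nonneg_left a4 hs, mul_le_mul_of_nonneg_left b4 ht]

lemma convexY4 : Convex ℝ Y4 := by
  rintro u ⟨a1,a2,a3,a4⟩ v ⟨b1,b2,b3,b4⟩ s t hs ht hst
  refine ⟨?_,?_,?_,?_⟩ <;> simp only [coord_comb] <;>
    nlinarith [mul_le_mul_of_nonneg_left a1 hs, mul_le_mul_of_nonneg_left b1 ht,
      mul_le_mul_of_nonneg_left a2 hs, mul_le_mul_of_nonneg_left b2 ht,
      mul_le_mul_of_nonneg_left a3 hs, mul_le_mul_of_nonneg_left b3 ht,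
      mul_le_mul_of_nonneg_left a4 hs, mul_le_mul_of_nonneg_left b4 ht]

lemma convexY5 : Convex ℝ Y5 := by
  rintro u ⟨a1,a2,a3⟩ v ⟨b1,b2,b3⟩ s t hs ht hst
  refine ⟨?_,?_,?_⟩ <;> simp only [coord_comb] <;>
    nlinarith [mul_le_mul_of_nonneg_left a1 hs, mul_le_mul_of_nonneg_left b1 ht,
      mul_le_mul_of_nonneg_left a2 hs, mul_le_mul_of_nonneg_left b2 ht,
      mul_le_mul_of_nonneg_left a3 hs, mul_le_mul_of_nonneg_left b3 ht]

lemma cont0 : Continuous (fun z : Euc 2 => z 0) := (continuous_apply 0).comp (PiLp.continuous_ofLp ..)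
lemma cont1 : Continuous (fun z : Euc 2 => z 1) := (continuous_apply 1).comp (PiLp.continuous_ofLp ..)

lemma closedY1 : IsClosed Y1 := by
  have : Y1 = {z : Euc 2 | -2 ≤ z 0} ∩ ({z | z 0 ≤ 2} ∩ ({z | -1 ≤ z 1} ∩ {z | z 1 ≤ 1/2})) := by
    ext z; simp only [Y1, Set.mem_setOf_eq, Set.mem_inter_iff, and_assoc]
  rw [this]
  exact (isClosed_le continuous_const cont0).inter ((isClosed_le cont0 continuous_const).inter
    ((isClosed_le continuous_const cont1).inter (isClosed_le cont1 continuous_const)))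

lemma closedY2 : IsClosed Y2 := by
  have : Y2 = {z : Euc 2 | z 0 ≤ 0} ∩ ({z | z 0 + 2 ≤ 2*z 1} ∩ {z | z 1 ≤ z 0 + 2}) := by
    ext z; simp only [Y2, Set.mem_setOf_eq, Set.mem_inter_iff, and_assoc]
  rw [this]
  exact (isClosed_le cont0 continuous_const).inter
    ((isClosed_le (cont0.add continuous_const) (continuous_const.mul cont1)).inter
      (isClosed_le cont1 (cont0.add continuous_const)))

lemma closedY3 : IsClosed Y3 := by
  have : Y3 = {z : Euc 2 | -5 ≤ z 0} ∩ ({z | z 0 ≤ 0} ∩ ({z | -5 ≤ z 1} ∩ {z | z 1 ≤ 5})) := by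
    ext z; simp only [Y3, Set.mem_setOf_eq, Set.mem_inter_iff, and_assoc]
  rw [this]
  exact (isClosed_le continuous_const cont0).inter ((isClosed_le cont0 continuous_const).inter
    ((isClosed_le continuous_const cont1).inter (isClosed_le cont1 continuous_const)))

lemma closedY4 : IsClosed Y4 := by
  have : Y4 = {z : Euc 2 | 0 ≤ z 0} ∩ ({z | z 0 ≤ 5} ∩ ({z | -5 ≤ z 1} ∩ {z | z 1 ≤ 5})) := by
    ext z; simp only [Y4, Set.mem_setOf_eq, Set.mem_inter_iff, and_assoc]
  rw [this]
  exact (isClosed_le continuous_const cont0).inter ((isClosed_le cont0 continuous_const).inter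
    ((isClosed_le continuous_const cont1).inter (isClosed_le cont1 continuous_const)))

lemma closedY5 : IsClosed Y5 := by
  have : Y5 = {z : Euc 2 | 0 ≤ z 0} ∩ ({z | 2 - z 0 ≤ 2*z 1} ∩ {z | z 1 ≤ 2 - z 0}) := by
    ext z; simp only [Y5, Set.mem_setOf_eq, Set.mem_inter_iff, and_assoc]
  rw [this]
  exact (isClosed_le continuous_const cont0).inter
    ((isClosed_le (continuous_const.sub cont0) (continuous_const.mul cont1)).inter
      (isClosed_le cont1 (continuous_const.sub cont0)))

lemma memYY0 (z : Euc 2) : z ∈ YY 0 ↔ (-2 ≤ z 0 ∧ z 0 ≤ 2 ∧ -1 ≤ z 1 ∧ z 1 ≤ 1/2) := Iff.rfl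
lemma memYY1 (z : Euc 2) : z ∈ YY 1 ↔ (z 0 ≤ 0 ∧ z 0 + 2 ≤ 2*z 1 ∧ z 1 ≤ z 0 + 2) := Iff.rfl
lemma memYY2 (z : Euc 2) : z ∈ YY 2 ↔ (-5 ≤ z 0 ∧ z 0 ≤ 0 ∧ -5 ≤ z 1 ∧ z 1 ≤ 5) := Iff.rfl
lemma memYY3 (z : Euc 2) : z ∈ YY 3 ↔ (0 ≤ z 0 ∧ z 0 ≤ 5 ∧ -5 ≤ z 1 ∧ z 1 ≤ 5) := Iff.rfl
lemma memYY4 (z : Euc 2) : z ∈ YY 4 ↔ (0 ≤ z 0 ∧ 2 - z 0 ≤ 2*z 1 ∧ z 1 ≤ 2 - z 0) := Iff.rfl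

set_option maxHeartbeats 1000000 in
lemma codeYY : codeOf YY = codeI2I := by
  apply Set.Subset.antisymm
  · rintro σ ⟨z, hz⟩
    have fin12 : ∀ s : Finset (Fin 5), σ = s →
        (s = {1,2,3,4} ∨ s = {0,1,2} ∨ s = {0,2,3} ∨ s = {0,3,4} ∨ s = {0,2} ∨ s = {0,3} ∨
         s = {1,2} ∨ s = {2,3} ∨ s = {3,4} ∨ s = {2} ∨ s = {3} ∨ s = ∅) → σ ∈ codeI2I := by
      intro s hσs hlist
      rw [hσs, codeI2I]
      simp only [Set.mem_insert_iff, Set.mem_singleton_iff]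
      exact hlist
    have mkσ : ∀ s : Finset (Fin 5),
        (z ∈ YY 0 ↔ 0 ∈ s) → (z ∈ YY 1 ↔ 1 ∈ s) → (z ∈ YY 2 ↔ 2 ∈ s) →
        (z ∈ YY 3 ↔ 3 ∈ s) → (z ∈ YY 4 ↔ 4 ∈ s) → σ = s := by
      intro s h0 h1 h2 h3 h4
      ext i
      fin_cases i
      · exact (hz 0).symm.trans h0
      · exact (hz 1).symm.trans h1
      · exact (hz 2).symm.trans h2
      · exact (hz 3).symm.trans h3
      · exact (hz 4).symm.trans h4
    rcases lt_trichotomy (z 0) 0 with hx | hx | hx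
    · -- z 0 < 0 : not in Y4 (lean 3) nor Y5 (lean 4)
      have n3 : z ∉ YY 3 := fun h => absurd ((memYY3 z).mp h).1 (not_le.mpr hx)
      have n4 : z ∉ YY 4 := fun h => absurd ((memYY4 z).mp h).1 (not_le.mpr hx)
      by_cases h1 : z ∈ YY 1
      · obtain ⟨ha, hb, hc⟩ := (memYY1 z).mp h1
        have h2 : z ∈ YY 2 := (memYY2 z).mpr ⟨by linarith, by linarith, by linarith, by linarith⟩
        by_cases h0 : z ∈ YY 0
        · exact fin12 {0,1,2} (mkσ _ (iff_of_true h0 (by decide)) (iff_of_true h1 (by decide))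
            (iff_of_true h2 (by decide)) (iff_of_false n3 (by decide))
            (iff_of_false n4 (by decide))) (by decide)
        · exact fin12 {1,2} (mkσ _ (iff_of_false h0 (by decide)) (iff_of_true h1 (by decide))
            (iff_of_true h2 (by decide)) (iff_of_false n3 (by decide))
            (iff_of_false n4 (by decide))) (by decide)
      · by_cases h0 : z ∈ YY 0
        · obtain ⟨ha, hb, hc, hd⟩ := (memYY0 z).mp h0
          have h2 : z ∈ YY 2 := (memYY2 z).mpr ⟨by linarith, by linarith, by linarith, by linarith⟩
          exact fin12 {0,2} (mkσ _ (iff_of_true h0 (by decide)) (iff_of_false h1 (by decide))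
            (iff_of_true h2 (by decide)) (iff_of_false n3 (by decide))
            (iff_of_false n4 (by decide))) (by decide)
        · by_cases h2 : z ∈ YY 2
          · exact fin12 {2} (mkσ _ (iff_of_false h0 (by decide)) (iff_of_false h1 (by decide))
              (iff_of_true h2 (by decide)) (iff_of_false n3 (by decide))
              (iff_of_false n4 (by decide))) (by decide)
          · exact fin12 ∅ (mkσ _ (iff_of_false h0 (by decide)) (iff_of_false h1 (by decide))
              (iff_of_false h2 (by decide)) (iff_of_false n3 (by decide))
              (iff_of_false n4 (by decide))) (by decide)
    · -- z 0 = 0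
      by_cases h1 : z ∈ YY 1
      · obtain ⟨-, hb, hc⟩ := (memYY1 z).mp h1
        have h2 : z ∈ YY 2 := (memYY2 z).mpr ⟨by linarith, by linarith, by linarith, by linarith⟩
        have h3 : z ∈ YY 3 := (memYY3 z).mpr ⟨by linarith, by linarith, by linarith, by linarith⟩
        have h4 : z ∈ YY 4 := (memYY4 z).mpr ⟨by linarith, by linarith, by linarith⟩
        have n0 : z ∉ YY 0 := fun h => by
          obtain ⟨-, -, -, hy⟩ := (memYY0 z).mp h; linarith
        exact fin12 {1,2,3,4} (mkσ _ (iff_of_false n0 (by decide)) (iff_of_true h1 (by decide))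
          (iff_of_true h2 (by decide)) (iff_of_true h3 (by decide))
          (iff_of_true h4 (by decide))) (by decide)
      · by_cases h0 : z ∈ YY 0
        · obtain ⟨-, -, hy1, hy2⟩ := (memYY0 z).mp h0
          have h2 : z ∈ YY 2 := (memYY2 z).mpr ⟨by linarith, by linarith, by linarith, by linarith⟩
          have h3 : z ∈ YY 3 := (memYY3 z).mpr ⟨by linarith, by linarith, by linarith, by linarith⟩
          have n4 : z ∉ YY 4 := fun h => by
            obtain ⟨-, hb, -⟩ := (memYY4 z).mp h; linarith
          exact fin12 {0,2,3} (mkσ _ (iff_of_true h0 (by decide)) (iff_of_false h1 (by decide))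
            (iff_of_true h2 (by decide)) (iff_of_true h3 (by decide))
            (iff_of_false n4 (by decide))) (by decide)
        · by_cases h2 : z ∈ YY 2
          · obtain ⟨-, -, hy1, hy2⟩ := (memYY2 z).mp h2
            have h3 : z ∈ YY 3 := (memYY3 z).mpr ⟨by linarith, by linarith, by linarith, by linarith⟩
            have n4 : z ∉ YY 4 := fun h => by
              obtain ⟨-, hb, hc⟩ := (memYY4 z).mp h
              exact h1 ((memYY1 z).mpr ⟨by linarith, by linarith, by linarith⟩)
            exact fin12 {2,3} (mkσ _ (iff_of_false h0 (by decide)) (iff_of_false h1 (by decide))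
              (iff_of_true h2 (by decide)) (iff_of_true h3 (by decide))
              (iff_of_false n4 (by decide))) (by decide)
          · have n3 : z ∉ YY 3 := fun h => by
              obtain ⟨-, -, hy1, hy2⟩ := (memYY3 z).mp h
              exact h2 ((memYY2 z).mpr ⟨by linarith, by linarith, by linarith, by linarith⟩)
            have n4 : z ∉ YY 4 := fun h => by
              obtain ⟨-, hb, hc⟩ := (memYY4 z).mp h
              exact h1 ((memYY1 z).mpr ⟨by linarith, by linarith, by linarith⟩)
            exact fin12 ∅ (mkσ _ (iff_of_false h0 (by decide)) (iff_of_false h1 (by decide))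
              (iff_of_false h2 (by decide)) (iff_of_false n3 (by decide))
              (iff_of_false n4 (by decide))) (by decide)
    · -- z 0 > 0
      have n1 : z ∉ YY 1 := fun h => absurd ((memYY1 z).mp h).1 (not_le.mpr hx)
      have n2 : z ∉ YY 2 := fun h => absurd ((memYY2 z).mp h).2.1 (not_le.mpr hx)
      by_cases h4 : z ∈ YY 4
      · obtain ⟨ha, hb, hc⟩ := (memYY4 z).mp h4
        have h3 : z ∈ YY 3 := (memYY3 z).mpr ⟨by linarith, by linarith, by linarith, by linarith⟩
        by_cases h0 : z ∈ YY 0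
        · exact fin12 {0,3,4} (mkσ _ (iff_of_true h0 (by decide)) (iff_of_false n1 (by decide))
            (iff_of_false n2 (by decide)) (iff_of_true h3 (by decide))
            (iff_of_true h4 (by decide))) (by decide)
        · exact fin12 {3,4} (mkσ _ (iff_of_false h0 (by decide)) (iff_of_false n1 (by decide))
            (iff_of_false n2 (by decide)) (iff_of_true h3 (by decide))
            (iff_of_true h4 (by decide))) (by decide)
      · by_cases h0 : z ∈ YY 0
        · obtain ⟨ha, hb, hc, hd⟩ := (memYY0 z).mp h0
          have h3 : z ∈ YY 3 := (memYY3 z).mpr ⟨by linarith, by linarith, by linarith, by linarith⟩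
          exact fin12 {0,3} (mkσ _ (iff_of_true h0 (by decide)) (iff_of_false n1 (by decide))
            (iff_of_false n2 (by decide)) (iff_of_true h3 (by decide))
            (iff_of_false h4 (by decide))) (by decide)
        · by_cases h3 : z ∈ YY 3
          · exact fin12 {3} (mkσ _ (iff_of_false h0 (by decide)) (iff_of_false n1 (by decide))
              (iff_of_false n2 (by decide)) (iff_of_true h3 (by decide))
              (iff_of_false h4 (by decide))) (by decide)
          · exact fin12 ∅ (mkσ _ (iff_of_false h0 (by decide)) (iff_of_false n1 (by decide))
              (iff_of_false n2 (by decide)) (iff_of_false h3 (by decide))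
              (iff_of_false h4 (by decide))) (by decide)
  · intro σ hσ
    rw [codeI2I] at hσ
    simp only [Set.mem_insert_iff, Set.mem_singleton_iff] at hσ
    rcases hσ with h|h|h|h|h|h|h|h|h|h|h|h <;> subst h
    · exact ⟨pt 0 (3/2), fun i => by
        fin_cases i
        · exact iff_of_false (by norm_num [memYY0, pt0, pt1]) (by decide)
        · exact iff_of_true (by norm_num [memYY1, pt0, pt1]) (by decide)
        · exact iff_of_true (by show _ ∈ Y3; norm_num [Y3, Set.mem_setOf_eq, pt0, pt1]) (by decide)
        · exact iff_of_true (by show _ ∈ Y4; norm_num [Y4, Set.mem_setOf_eq, pt0, pt1]) (by decide)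
        · exact iff_of_true (by show _ ∈ Y5; norm_num [Y5, Set.mem_setOf_eq, pt0, pt1]) (by decide)⟩
    · exact ⟨pt (-2) 0, fun i => by
        fin_cases i
        · exact iff_of_true (by norm_num [memYY0, pt0, pt1]) (by decide)
        · exact iff_of_true (by norm_num [memYY1, pt0, pt1]) (by decide)
        · exact iff_of_true (by show _ ∈ Y3; norm_num [Y3, Set.mem_setOf_eq, pt0, pt1]) (by decide)
        · exact iff_of_false (by show _ ∉ Y4; norm_num [Y4, Set.mem_setOf_eq, pt0, pt1]) (by decide)
        · exact iff_of_false (by show _ ∉ Y5; norm_num [Y5, Set.mem_setOf_eq, pt0, pt1]) (by decide)⟩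
    · exact ⟨pt 0 0, fun i => by
        fin_cases i
        · exact iff_of_true (by norm_num [memYY0, pt0, pt1]) (by decide)
        · exact iff_of_false (by norm_num [memYY1, pt0, pt1]) (by decide)
        · exact iff_of_true (by show _ ∈ Y3; norm_num [Y3, Set.mem_setOf_eq, pt0, pt1]) (by decide)
        · exact iff_of_true (by show _ ∈ Y4; norm_num [Y4, Set.mem_setOf_eq, pt0, pt1]) (by decide)
        · exact iff_of_false (by show _ ∉ Y5; norm_num [Y5, Set.mem_setOf_eq, pt0, pt1]) (by decide)⟩
    · exact ⟨pt 2 0, fun i => by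
        fin_cases i
        · exact iff_of_true (by norm_num [memYY0, pt0, pt1]) (by decide)
        · exact iff_of_false (by norm_num [memYY1, pt0, pt1]) (by decide)
        · exact iff_of_false (by show _ ∉ Y3; norm_num [Y3, Set.mem_setOf_eq, pt0, pt1]) (by decide)
        · exact iff_of_true (by show _ ∈ Y4; norm_num [Y4, Set.mem_setOf_eq, pt0, pt1]) (by decide)
        · exact iff_of_true (by show _ ∈ Y5; norm_num [Y5, Set.mem_setOf_eq, pt0, pt1]) (by decide)⟩
    · exact ⟨pt (-1) 0, fun i => by
        fin_cases i
        · exact iff_of_true (by norm_num [memYY0, pt0, pt1]) (by decide)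
        · exact iff_of_false (by norm_num [memYY1, pt0, pt1]) (by decide)
        · exact iff_of_true (by show _ ∈ Y3; norm_num [Y3, Set.mem_setOf_eq, pt0, pt1]) (by decide)
        · exact iff_of_false (by show _ ∉ Y4; norm_num [Y4, Set.mem_setOf_eq, pt0, pt1]) (by decide)
        · exact iff_of_false (by show _ ∉ Y5; norm_num [Y5, Set.mem_setOf_eq, pt0, pt1]) (by decide)⟩
    · exact ⟨pt 1 0, fun i => by
        fin_cases i
        · exact iff_of_true (by norm_num [memYY0, pt0, pt1]) (by decide)
        · exact iff_of_false (by norm_num [memYY1, pt0, pt1]) (by decide)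
        · exact iff_of_false (by show _ ∉ Y3; norm_num [Y3, Set.mem_setOf_eq, pt0, pt1]) (by decide)
        · exact iff_of_true (by show _ ∈ Y4; norm_num [Y4, Set.mem_setOf_eq, pt0, pt1]) (by decide)
        · exact iff_of_false (by show _ ∉ Y5; norm_num [Y5, Set.mem_setOf_eq, pt0, pt1]) (by decide)⟩
    · exact ⟨pt (-1) 1, fun i => by
        fin_cases i
        · exact iff_of_false (by norm_num [memYY0, pt0, pt1]) (by decide)
        · exact iff_of_true (by norm_num [memYY1, pt0, pt1]) (by decide)
        · exact iff_of_true (by show _ ∈ Y3; norm_num [Y3, Set.mem_setOf_eq, pt0, pt1]) (by decide)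
        · exact iff_of_false (by show _ ∉ Y4; norm_num [Y4, Set.mem_setOf_eq, pt0, pt1]) (by decide)
        · exact iff_of_false (by show _ ∉ Y5; norm_num [Y5, Set.mem_setOf_eq, pt0, pt1]) (by decide)⟩
    · exact ⟨pt 0 3, fun i => by
        fin_cases i
        · exact iff_of_false (by norm_num [memYY0, pt0, pt1]) (by decide)
        · exact iff_of_false (by norm_num [memYY1, pt0, pt1]) (by decide)
        · exact iff_of_true (by show _ ∈ Y3; norm_num [Y3, Set.mem_setOf_eq, pt0, pt1]) (by decide)
        · exact iff_of_true (by show _ ∈ Y4; norm_num [Y4, Set.mem_setOf_eq, pt0, pt1]) (by decide)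
        · exact iff_of_false (by show _ ∉ Y5; norm_num [Y5, Set.mem_setOf_eq, pt0, pt1]) (by decide)⟩
    · exact ⟨pt 1 1, fun i => by
        fin_cases i
        · exact iff_of_false (by norm_num [memYY0, pt0, pt1]) (by decide)
        · exact iff_of_false (by norm_num [memYY1, pt0, pt1]) (by decide)
        · exact iff_of_false (by show _ ∉ Y3; norm_num [Y3, Set.mem_setOf_eq, pt0, pt1]) (by decide)
        · exact iff_of_true (by show _ ∈ Y4; norm_num [Y4, Set.mem_setOf_eq, pt0, pt1]) (by decide)
        · exact iff_of_true (by show _ ∈ Y5; norm_num [Y5, Set.mem_setOf_eq, pt0, pt1]) (by decide)⟩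
    · exact ⟨pt (-3) 3, fun i => by
        fin_cases i
        · exact iff_of_false (by norm_num [memYY0, pt0, pt1]) (by decide)
        · exact iff_of_false (by norm_num [memYY1, pt0, pt1]) (by decide)
        · exact iff_of_true (by show _ ∈ Y3; norm_num [Y3, Set.mem_setOf_eq, pt0, pt1]) (by decide)
        · exact iff_of_false (by show _ ∉ Y4; norm_num [Y4, Set.mem_setOf_eq, pt0, pt1]) (by decide)
        · exact iff_of_false (by show _ ∉ Y5; norm_num [Y5, Set.mem_setOf_eq, pt0, pt1]) (by decide)⟩
    · exact ⟨pt 3 3, fun i => by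
        fin_cases i
        · exact iff_of_false (by norm_num [memYY0, pt0, pt1]) (by decide)
        · exact iff_of_false (by norm_num [memYY1, pt0, pt1]) (by decide)
        · exact iff_of_false (by show _ ∉ Y3; norm_num [Y3, Set.mem_setOf_eq, pt0, pt1]) (by decide)
        · exact iff_of_true (by show _ ∈ Y4; norm_num [Y4, Set.mem_setOf_eq, pt0, pt1]) (by decide)
        · exact iff_of_false (by show _ ∉ Y5; norm_num [Y5, Set.mem_setOf_eq, pt0, pt1]) (by decide)⟩
    · exact ⟨pt (-6) 0, fun i => by
        fin_cases i
        · exact iff_of_false (by norm_num [memYY0, pt0, pt1]) (by decide)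
        · exact iff_of_false (by norm_num [memYY1, pt0, pt1]) (by decide)
        · exact iff_of_false (by show _ ∉ Y3; norm_num [Y3, Set.mem_setOf_eq, pt0, pt1]) (by decide)
        · exact iff_of_false (by show _ ∉ Y4; norm_num [Y4, Set.mem_setOf_eq, pt0, pt1]) (by decide)
        · exact iff_of_false (by show _ ∉ Y5; norm_num [Y5, Set.mem_setOf_eq, pt0, pt1]) (by decide)⟩

lemma has_closed_two : HasClosedReal codeI2I 2 := by
  refine ⟨YY, fun i => ?_, fun i => ?_, codeYY⟩
  · fin_cases i
    · exact convexY1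
    · exact convexY2
    · exact convexY3
    · exact convexY4
    · exact convexY5
  · fin_cases i
    · exact closedY1
    · exact closedY2
    · exact closedY3
    · exact closedY4
    · exact closedY5


lemma no_open_real (d : ℕ) : ¬ HasOpenReal codeI2I d := by
  rintro ⟨U, hconv, hopen, hcode⟩
  classical
  -- every point's codeword is in codeI2I
  have hmem : ∀ z : Euc d, ∃ σ ∈ codeI2I, ∀ i, z ∈ U i ↔ i ∈ σ := by
    intro z
    refine ⟨Finset.univ.filter (fun i => z ∈ U i), ?_, ?_⟩
    · rw [← hcode]; exact ⟨z, fun i => by simp⟩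
    · intro i; simp
  -- pointwise rules
  have rules : ∀ z : Euc d,
      ((z ∈ U 1 ∧ z ∈ U 3) → (z ∈ U 2 ∧ z ∈ U 4 ∧ z ∉ U 0)) ∧
      ((z ∈ U 2 ∧ z ∈ U 4) → (z ∈ U 1 ∧ z ∈ U 3 ∧ z ∉ U 0)) ∧
      (z ∈ U 0 → z ∈ U 2 ∨ z ∈ U 3) := by
    intro z
    obtain ⟨σ, hσC, hσ⟩ := hmem z
    rw [codeI2I] at hσC
    simp only [Set.mem_insert_iff, Set.mem_singleton_iff] at hσC
    rcases hσC with h|h|h|h|h|h|h|h|h|h|h|h <;> subst h <;> simp only [hσ] <;> decide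
  -- witnesses for the three key codewords
  have hsub : codeI2I ⊆ codeOf U := hcode ▸ Set.Subset.refl _
  obtain ⟨p, hp⟩ := hsub (show ({0,1,2} : Finset (Fin 5)) ∈ codeI2I by
    rw [codeI2I]; simp only [Set.mem_insert_iff, Set.mem_singleton_iff]; decide)
  obtain ⟨q, hq⟩ := hsub (show ({0,3,4} : Finset (Fin 5)) ∈ codeI2I by
    rw [codeI2I]; simp only [Set.mem_insert_iff, Set.mem_singleton_iff]; decide)
  obtain ⟨w, hw⟩ := hsub (show ({1,2,3,4} : Finset (Fin 5)) ∈ codeI2I by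
    rw [codeI2I]; simp only [Set.mem_insert_iff, Set.mem_singleton_iff]; decide)
  have hp0 : p ∈ U 0 := (hp 0).mpr (by decide)
  have hp1 : p ∈ U 1 := (hp 1).mpr (by decide)
  have hp2 : p ∈ U 2 := (hp 2).mpr (by decide)
  have hp3 : p ∉ U 3 := fun h => absurd ((hp 3).mp h) (by decide)
  have hp4 : p ∉ U 4 := fun h => absurd ((hp 4).mp h) (by decide)
  have hq0 : q ∈ U 0 := (hq 0).mpr (by decide)
  have hq3 : q ∈ U 3 := (hq 3).mpr (by decide)
  have hq4 : q ∈ U 4 := (hq 4).mpr (by decide)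
  have hq1 : q ∉ U 1 := fun h => absurd ((hq 1).mp h) (by decide)
  have hq2 : q ∉ U 2 := fun h => absurd ((hq 2).mp h) (by decide)
  have hw1 : w ∈ U 1 := (hw 1).mpr (by decide)
  have hw2 : w ∈ U 2 := (hw 2).mpr (by decide)
  have hw3 : w ∈ U 3 := (hw 3).mpr (by decide)
  have hw4 : w ∈ U 4 := (hw 4).mpr (by decide)
  -- the affine map from the plane
  set Ψ : ℝ × ℝ → Euc d := fun s => p + s.1 • (q - p) + s.2 • (w - p) with hΨ_def
  have hΨcont : Continuous Ψ := by
    apply Continuous.add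
    apply Continuous.add continuous_const
    · exact continuous_fst.smul continuous_const
    · exact continuous_snd.smul continuous_const
  have hΨaff : ∀ (u v : ℝ × ℝ) (α β : ℝ), α + β = 1 →
      Ψ (α • u + β • v) = α • Ψ u + β • Ψ v := by
    intro u v α β hαβ
    simp only [hΨ_def, Prod.fst_add, Prod.snd_add, Prod.smul_fst, Prod.smul_snd,
      smul_eq_mul]
    match_scalars
    case _ => linear_combination -hαβ
    all_goals ring
  have hΨconv : ∀ (S : Set (Euc d)), Convex ℝ S → Convex ℝ (Ψ ⁻¹' S) := by
    intro S hS u hu v hv α β hα hβ hαβ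
    show Ψ (α • u + β • v) ∈ S
    rw [hΨaff u v α β hαβ]
    exact hS hu hv hα hβ hαβ
  have hΨ00 : Ψ ((0:ℝ),(0:ℝ)) = p := by simp [hΨ_def]
  have hΨ10 : Ψ ((1:ℝ),(0:ℝ)) = q := by simp [hΨ_def]
  have hΨ01 : Ψ ((0:ℝ),(1:ℝ)) = w := by simp [hΨ_def]
  refine core2d (Ψ ⁻¹' U 0) (Ψ ⁻¹' U 1) (Ψ ⁻¹' U 2) (Ψ ⁻¹' U 3) (Ψ ⁻¹' U 4)
    ((hopen 1).preimage hΨcont) ((hopen 2).preimage hΨcont) ((hopen 3).preimage hΨcont)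
    ((hopen 4).preimage hΨcont)
    (hΨconv _ (hconv 0)) (hΨconv _ (hconv 1)) (hΨconv _ (hconv 2)) (hΨconv _ (hconv 3))
    (hΨconv _ (hconv 4))
    ((hopen 0).preimage hΨcont)
    ?_ ?_ ?_ ?_ ?_ ?_ ?_ ?_ ?_ ?_ ?_ ?_ ?_ ?_ ?_ ?_ ?_
  · show Ψ _ ∈ U 0; rw [hΨ00]; exact hp0
  · show Ψ _ ∈ U 1; rw [hΨ00]; exact hp1
  · show Ψ _ ∉ U 3; rw [hΨ00]; exact hp3
  · show Ψ _ ∉ U 4; rw [hΨ00]; exact hp4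
  · show Ψ _ ∈ U 0; rw [hΨ10]; exact hq0
  · show Ψ _ ∈ U 3; rw [hΨ10]; exact hq3
  · show Ψ _ ∈ U 4; rw [hΨ10]; exact hq4
  · show Ψ _ ∉ U 1; rw [hΨ10]; exact hq1
  · show Ψ _ ∉ U 2; rw [hΨ10]; exact hq2
  · show Ψ _ ∈ U 1; rw [hΨ01]; exact hw1
  · show Ψ _ ∈ U 3; rw [hΨ01]; exact hw3
  · show Ψ _ ∈ U 2; rw [hΨ00]; exact hp2
  · intro s hs
    rcases (rules (Ψ s)).2.2 hs with h | h
    · exact Or.inl h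
    · exact Or.inr h
  · intro s hs
    exact ((rules (Ψ s)).1 ⟨hs.1, hs.2⟩).1
  · intro s hs
    exact ((rules (Ψ s)).1 ⟨hs.1, hs.2⟩).2.1
  · intro s hs
    exact ((rules (Ψ s)).1 ⟨hs.1, hs.2⟩).2.2
  · intro s hs
    exact ⟨((rules (Ψ s)).2.1 ⟨hs.1, hs.2⟩).1, ((rules (Ψ s)).2.1 ⟨hs.1, hs.2⟩).2.1⟩


lemma no_closed_one : ¬ HasClosedReal codeI2I 1 := by
  rintro ⟨X, hconv, hclosed, hcode⟩
  have hsub : codeI2I ⊆ codeOf X := hcode ▸ Set.Subset.refl _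
  obtain ⟨p, hp⟩ := hsub (show ({0,1,2} : Finset (Fin 5)) ∈ codeI2I by
    rw [codeI2I]; simp only [Set.mem_insert_iff, Set.mem_singleton_iff]; decide)
  obtain ⟨q, hq⟩ := hsub (show ({0,3,4} : Finset (Fin 5)) ∈ codeI2I by
    rw [codeI2I]; simp only [Set.mem_insert_iff, Set.mem_singleton_iff]; decide)
  obtain ⟨w, hw⟩ := hsub (show ({1,2,3,4} : Finset (Fin 5)) ∈ codeI2I by
    rw [codeI2I]; simp only [Set.mem_insert_iff, Set.mem_singleton_iff]; decide)
  have hp0 : p ∈ X 0 := (hp 0).mpr (by decide)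
  have hp1 : p ∈ X 1 := (hp 1).mpr (by decide)
  have hp4 : p ∉ X 4 := fun h => absurd ((hp 4).mp h) (by decide)
  have hq0 : q ∈ X 0 := (hq 0).mpr (by decide)
  have hq4 : q ∈ X 4 := (hq 4).mpr (by decide)
  have hq1 : q ∉ X 1 := fun h => absurd ((hq 1).mp h) (by decide)
  have hw1 : w ∈ X 1 := (hw 1).mpr (by decide)
  have hw4 : w ∈ X 4 := (hw 4).mpr (by decide)
  have hw0 : w ∉ X 0 := fun h => absurd ((hw 0).mp h) (by decide)
  -- a betweenness lemma in Euc 1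
  have segm : ∀ u v z : Euc 1, u 0 ≤ v 0 → u 0 ≤ z 0 → z 0 ≤ v 0 → z ∈ segment ℝ u v := by
    intro u v z huv huz hzv
    rcases eq_or_lt_of_le huv with he | hlt
    · have hz : z = u := by
        ext i
        have hi : i = 0 := Subsingleton.elim i 0
        subst hi
        rw [← he] at hzv
        linarith
      rw [hz]; exact left_mem_segment ℝ u v
    · set t : ℝ := (z 0 - u 0)/(v 0 - u 0) with ht_def
      have hd : (0:ℝ) < v 0 - u 0 := sub_pos.mpr hlt
      have ht0 : 0 ≤ t := div_nonneg (by linarith) (le_of_lt hd)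
      have ht1 : t ≤ 1 := by
        rw [ht_def, div_le_one hd]; linarith
      refine ⟨1 - t, t, by linarith, ht0, by ring, ?_⟩
      have hmul : t * (v 0 - u 0) = z 0 - u 0 := div_mul_cancel₀ _ (ne_of_gt hd)
      have hcoord : (1-t) * u 0 + t * v 0 = z 0 := by
        have : t * (v 0 - u 0) = t * v 0 - t * u 0 := by ring
        linarith [hmul, this]
      ext i
      have hi : i = 0 := Subsingleton.elim i 0
      subst hi
      simpa [PiLp.add_apply, PiLp.smul_apply, smul_eq_mul] using hcoord
  have segAny : ∀ u v z : Euc 1, min (u 0) (v 0) ≤ z 0 → z 0 ≤ max (u 0) (v 0) →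
      z ∈ segment ℝ u v := by
    intro u v z h1 h2
    rcases le_total (u 0) (v 0) with h | h
    · exact segm u v z h (by rwa [min_eq_left h] at h1) (by rwa [max_eq_right h] at h2)
    · rw [segment_symm]
      exact segm v u z h (by rwa [min_eq_right h] at h1) (by rwa [max_eq_left h] at h2)
  set a : ℝ := p 0
  set b : ℝ := q 0
  set c : ℝ := w 0
  have tri : (min a b ≤ c ∧ c ≤ max a b) ∨ (min c b ≤ a ∧ a ≤ max c b) ∨
      (min a c ≤ b ∧ b ≤ max a c) := by
    rcases le_total a b with h | h <;> rcases le_total b c with h' | h' <;>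
      rcases le_total a c with h'' | h''
    · exact Or.inr (Or.inr ⟨le_trans (min_le_left a c) h, le_trans h' (le_max_right a c)⟩)
    · exact Or.inr (Or.inr ⟨le_trans (min_le_left a c) h, le_trans h' (le_max_right a c)⟩)
    · exact Or.inl ⟨le_trans (min_le_left a b) h'', le_trans h' (le_max_right a b)⟩
    · exact Or.inr (Or.inl ⟨le_trans (min_le_left c b) h'', le_trans h (le_max_right c b)⟩)
    · exact Or.inr (Or.inl ⟨le_trans (min_le_right c b) h, le_trans h'' (le_max_left c b)⟩)
    · exact Or.inl ⟨le_trans (min_le_right a b) h', le_trans h'' (le_max_left a b)⟩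
    · exact Or.inl ⟨le_trans (min_le_right a b) (le_trans h h''), le_trans h' (le_max_right a b)⟩
    · exact Or.inr (Or.inr ⟨le_trans (min_le_right a c) h', le_trans h (le_max_left a c)⟩)
  rcases tri with ⟨h1, h2⟩ | ⟨h1, h2⟩ | ⟨h1, h2⟩
  · exact hw0 ((hconv 0).segment_subset hp0 hq0 (segAny p q w h1 h2))
  · exact hp4 ((hconv 4).segment_subset hw4 hq4 (segAny w q p h1 h2))
  · exact hq1 ((hconv 1).segment_subset hp1 hw1 (segAny p w q h1 h2))


lemma no_nondeg_real (d : ℕ) : ¬ HasNondegReal codeI2I d := by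
  rintro (⟨U, hU, -⟩ | ⟨X, hX, hXint⟩)
  · exact no_open_real d ⟨U, hU⟩
  · exact no_open_real d ⟨fun i => interior (X i),
      fun i => (hX.1 i).interior, fun i => isOpen_interior, hXint⟩


/-- `C_{(∞,2,∞)}` has embedding dimension vector `(∞, 2, ∞)`. -/
theorem codeI2I_embedding_dimensions :
    (∀ d : ℕ, ¬ HasOpenReal codeI2I d) ∧
    (∀ d : ℕ, ¬ HasNondegReal codeI2I d) ∧
    HasClosedReal codeI2I 2 ∧
    ¬ HasClosedReal codeI2I 1 :=
  ⟨no_open_real, no_nondeg_real, has_closed_two, no_closed_one⟩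

end
end

section
/- The code C_{(2,∞,∞)} = {{1,2,3}, {1,2,6}, {1,5,6}, {2,3,4}, {3,4,5}, {4,5,6}, {1,2}, {1,6}, {2,3}, {3,4}, {4,5}, {5,6}, ∅} on [6] has embedding dimension vector (2, ∞, ∞): it has an open convex realization in ℝ^2 but no open convex realization in ℝ^1, and it has no closed convex realization in ℝ^d for any d (hence also no non-degenerate convex realization in any dimension). -/
open Set

noncomputable section

/-- The code `C_{(2,∞,∞)}` on `[6]` (indices shifted to `Fin 6`):
`{123, 126, 156, 234, 345, 456, 12, 16, 23, 34, 45, 56, ∅}`. -/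
def code2II : Set (Finset (Fin 6)) :=
  {{0, 1, 2}, {0, 1, 5}, {0, 4, 5}, {1, 2, 3}, {2, 3, 4}, {3, 4, 5}, {0, 1}, {0, 5},
    {1, 2}, {2, 3}, {3, 4}, {4, 5}, (∅ : Finset (Fin 6))}

def cx : Fin 6 → ℝ := ![1, 1, 0, -1, -1, 0]
def cy : Fin 6 → ℝ := ![0, 1, 1, 0, -1, -1]
def Uo : Fin 6 → Set (Euc 2) := fun i => {p | 0 < cx i * p 0 + cy i * p 1}
@[simp] lemma cx0 : cx 0 = 1 := rfl
@[simp] lemma cx1 : cx 1 = 1 := rfl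
@[simp] lemma cx2 : cx 2 = 0 := rfl
@[simp] lemma cx3 : cx 3 = -1 := rfl
@[simp] lemma cx4 : cx 4 = -1 := rfl
@[simp] lemma cx5 : cx 5 = 0 := rfl
@[simp] lemma cy0 : cy 0 = 0 := rfl
@[simp] lemma cy1 : cy 1 = 1 := rfl
@[simp] lemma cy2 : cy 2 = 1 := rfl
@[simp] lemma cy3 : cy 3 = 0 := rfl
@[simp] lemma cy4 : cy 4 = -1 := rfl
@[simp] lemma cy5 : cy 5 = -1 := rfl

set_option maxHeartbeats 2000000 in
lemma hasOpen2 : HasOpenReal code2II 2 := by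
  refine ⟨Uo, fun i => ?_, fun i => isOpen_lt continuous_const (by fun_prop), ?_⟩
  · intro u hu v hv s t hs ht hst
    simp only [Uo, Set.mem_setOf_eq] at *
    have e0 : (s • u + t • v) 0 = s * u 0 + t * v 0 := rfl
    have e1 : (s • u + t • v) 1 = s * u 1 + t * v 1 := rfl
    rw [e0, e1]
    rcases eq_or_lt_of_le hs with rfl|hs'
    · simp only [zero_add] at hst; subst hst; simpa using hv
    · nlinarith [mul_pos hs' hu, mul_nonneg ht hv.le]
  ext σ
  constructor
  · rintro ⟨p, h⟩
    have h0 : 0 < p 0 ↔ (0 : Fin 6) ∈ σ := by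
      constructor
      · intro hv
        refine (h 0).mp ?_
        show 0 < cx 0 * p 0 + cy 0 * p 1
        norm_num; try linarith
      · intro hm
        have hx := (h 0).mpr hm
        have hx' : 0 < cx 0 * p 0 + cy 0 * p 1 := hx
        norm_num at hx'
        linarith
    have h1 : 0 < p 0 + p 1 ↔ (1 : Fin 6) ∈ σ := by
      constructor
      · intro hv
        refine (h 1).mp ?_
        show 0 < cx 1 * p 0 + cy 1 * p 1
        norm_num; try linarith
      · intro hm
        have hx := (h 1).mpr hm
        have hx' : 0 < cx 1 * p 0 + cy 1 * p 1 := hx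
        norm_num at hx'
        linarith
    have h2 : 0 < p 1 ↔ (2 : Fin 6) ∈ σ := by
      constructor
      · intro hv
        refine (h 2).mp ?_
        show 0 < cx 2 * p 0 + cy 2 * p 1
        norm_num; try linarith
      · intro hm
        have hx := (h 2).mpr hm
        have hx' : 0 < cx 2 * p 0 + cy 2 * p 1 := hx
        norm_num at hx'
        linarith
    have h3 : 0 < -p 0 ↔ (3 : Fin 6) ∈ σ := by
      constructor
      · intro hv
        refine (h 3).mp ?_
        show 0 < cx 3 * p 0 + cy 3 * p 1
        norm_num; try linarith
      · intro hm
        have hx := (h 3).mpr hm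
        have hx' : 0 < cx 3 * p 0 + cy 3 * p 1 := hx
        norm_num at hx'
        linarith
    have h4 : 0 < -p 0 - p 1 ↔ (4 : Fin 6) ∈ σ := by
      constructor
      · intro hv
        refine (h 4).mp ?_
        show 0 < cx 4 * p 0 + cy 4 * p 1
        norm_num; try linarith
      · intro hm
        have hx := (h 4).mpr hm
        have hx' : 0 < cx 4 * p 0 + cy 4 * p 1 := hx
        norm_num at hx'
        linarith
    have h5 : 0 < -p 1 ↔ (5 : Fin 6) ∈ σ := by
      constructor
      · intro hv
        refine (h 5).mp ?_
        show 0 < cx 5 * p 0 + cy 5 * p 1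
        norm_num; try linarith
      · intro hm
        have hx := (h 5).mpr hm
        have hx' : 0 < cx 5 * p 0 + cy 5 * p 1 := hx
        norm_num at hx'
        linarith
    clear h
    rcases lt_trichotomy 0 (p 0) with hx|hx|hx <;> rcases lt_trichotomy 0 (p 1) with hy|hy|hy <;>
      rcases lt_trichotomy 0 (p 0 + p 1) with hsx|hsx|hsx
    · have e : σ = ({0, 1, 2} : Finset (Fin 6)) := by
        ext i; fin_cases i
        exacts [iff_of_true (h0.mp (by linarith)) (by decide),
          iff_of_true (h1.mp (by linarith)) (by decide),
          iff_of_true (h2.mp (by linarith)) (by decide),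
          iff_of_false (fun hm => absurd (h3.mpr hm) (by intro hv; linarith)) (by decide),
          iff_of_false (fun hm => absurd (h4.mpr hm) (by intro hv; linarith)) (by decide),
          iff_of_false (fun hm => absurd (h5.mpr hm) (by intro hv; linarith)) (by decide)]
      rw [e]; simp [code2II]
    · exfalso; linarith
    · exfalso; linarith
    · have e : σ = ({0, 1} : Finset (Fin 6)) := by
        ext i; fin_cases i
        exacts [iff_of_true (h0.mp (by linarith)) (by decide),
          iff_of_true (h1.mp (by linarith)) (by decide),
          iff_of_false (fun hm => absurd (h2.mpr hm) (by intro hv; linarith)) (by decide),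
          iff_of_false (fun hm => absurd (h3.mpr hm) (by intro hv; linarith)) (by decide),
          iff_of_false (fun hm => absurd (h4.mpr hm) (by intro hv; linarith)) (by decide),
          iff_of_false (fun hm => absurd (h5.mpr hm) (by intro hv; linarith)) (by decide)]
      rw [e]; simp [code2II]
    · exfalso; linarith
    · exfalso; linarith
    · have e : σ = ({0, 1, 5} : Finset (Fin 6)) := by
        ext i; fin_cases i
        exacts [iff_of_true (h0.mp (by linarith)) (by decide),
          iff_of_true (h1.mp (by linarith)) (by decide),
          iff_of_false (fun hm => absurd (h2.mpr hm) (by intro hv; linarith)) (by decide),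
          iff_of_false (fun hm => absurd (h3.mpr hm) (by intro hv; linarith)) (by decide),
          iff_of_false (fun hm => absurd (h4.mpr hm) (by intro hv; linarith)) (by decide),
          iff_of_true (h5.mp (by linarith)) (by decide)]
      rw [e]; simp [code2II]
    · have e : σ = ({0, 5} : Finset (Fin 6)) := by
        ext i; fin_cases i
        exacts [iff_of_true (h0.mp (by linarith)) (by decide),
          iff_of_false (fun hm => absurd (h1.mpr hm) (by intro hv; linarith)) (by decide),
          iff_of_false (fun hm => absurd (h2.mpr hm) (by intro hv; linarith)) (by decide),
          iff_of_false (fun hm => absurd (h3.mpr hm) (by intro hv; linarith)) (by decide),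
          iff_of_false (fun hm => absurd (h4.mpr hm) (by intro hv; linarith)) (by decide),
          iff_of_true (h5.mp (by linarith)) (by decide)]
      rw [e]; simp [code2II]
    · have e : σ = ({0, 4, 5} : Finset (Fin 6)) := by
        ext i; fin_cases i
        exacts [iff_of_true (h0.mp (by linarith)) (by decide),
          iff_of_false (fun hm => absurd (h1.mpr hm) (by intro hv; linarith)) (by decide),
          iff_of_false (fun hm => absurd (h2.mpr hm) (by intro hv; linarith)) (by decide),
          iff_of_false (fun hm => absurd (h3.mpr hm) (by intro hv; linarith)) (by decide),
          iff_of_true (h4.mp (by linarith)) (by decide),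
          iff_of_true (h5.mp (by linarith)) (by decide)]
      rw [e]; simp [code2II]
    · have e : σ = ({1, 2} : Finset (Fin 6)) := by
        ext i; fin_cases i
        exacts [iff_of_false (fun hm => absurd (h0.mpr hm) (by intro hv; linarith)) (by decide),
          iff_of_true (h1.mp (by linarith)) (by decide),
          iff_of_true (h2.mp (by linarith)) (by decide),
          iff_of_false (fun hm => absurd (h3.mpr hm) (by intro hv; linarith)) (by decide),
          iff_of_false (fun hm => absurd (h4.mpr hm) (by intro hv; linarith)) (by decide),
          iff_of_false (fun hm => absurd (h5.mpr hm) (by intro hv; linarith)) (by decide)]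
      rw [e]; simp [code2II]
    · exfalso; linarith
    · exfalso; linarith
    · exfalso; linarith
    · have e : σ = (∅ : Finset (Fin 6)) := by
        ext i; fin_cases i
        exacts [iff_of_false (fun hm => absurd (h0.mpr hm) (by intro hv; linarith)) (by decide),
          iff_of_false (fun hm => absurd (h1.mpr hm) (by intro hv; linarith)) (by decide),
          iff_of_false (fun hm => absurd (h2.mpr hm) (by intro hv; linarith)) (by decide),
          iff_of_false (fun hm => absurd (h3.mpr hm) (by intro hv; linarith)) (by decide),
          iff_of_false (fun hm => absurd (h4.mpr hm) (by intro hv; linarith)) (by decide),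
          iff_of_false (fun hm => absurd (h5.mpr hm) (by intro hv; linarith)) (by decide)]
      rw [e]; simp [code2II]
    · exfalso; linarith
    · exfalso; linarith
    · exfalso; linarith
    · have e : σ = ({4, 5} : Finset (Fin 6)) := by
        ext i; fin_cases i
        exacts [iff_of_false (fun hm => absurd (h0.mpr hm) (by intro hv; linarith)) (by decide),
          iff_of_false (fun hm => absurd (h1.mpr hm) (by intro hv; linarith)) (by decide),
          iff_of_false (fun hm => absurd (h2.mpr hm) (by intro hv; linarith)) (by decide),
          iff_of_false (fun hm => absurd (h3.mpr hm) (by intro hv; linarith)) (by decide),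
          iff_of_true (h4.mp (by linarith)) (by decide),
          iff_of_true (h5.mp (by linarith)) (by decide)]
      rw [e]; simp [code2II]
    · have e : σ = ({1, 2, 3} : Finset (Fin 6)) := by
        ext i; fin_cases i
        exacts [iff_of_false (fun hm => absurd (h0.mpr hm) (by intro hv; linarith)) (by decide),
          iff_of_true (h1.mp (by linarith)) (by decide),
          iff_of_true (h2.mp (by linarith)) (by decide),
          iff_of_true (h3.mp (by linarith)) (by decide),
          iff_of_false (fun hm => absurd (h4.mpr hm) (by intro hv; linarith)) (by decide),
          iff_of_false (fun hm => absurd (h5.mpr hm) (by intro hv; linarith)) (by decide)]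
      rw [e]; simp [code2II]
    · have e : σ = ({2, 3} : Finset (Fin 6)) := by
        ext i; fin_cases i
        exacts [iff_of_false (fun hm => absurd (h0.mpr hm) (by intro hv; linarith)) (by decide),
          iff_of_false (fun hm => absurd (h1.mpr hm) (by intro hv; linarith)) (by decide),
          iff_of_true (h2.mp (by linarith)) (by decide),
          iff_of_true (h3.mp (by linarith)) (by decide),
          iff_of_false (fun hm => absurd (h4.mpr hm) (by intro hv; linarith)) (by decide),
          iff_of_false (fun hm => absurd (h5.mpr hm) (by intro hv; linarith)) (by decide)]
      rw [e]; simp [code2II]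
    · have e : σ = ({2, 3, 4} : Finset (Fin 6)) := by
        ext i; fin_cases i
        exacts [iff_of_false (fun hm => absurd (h0.mpr hm) (by intro hv; linarith)) (by decide),
          iff_of_false (fun hm => absurd (h1.mpr hm) (by intro hv; linarith)) (by decide),
          iff_of_true (h2.mp (by linarith)) (by decide),
          iff_of_true (h3.mp (by linarith)) (by decide),
          iff_of_true (h4.mp (by linarith)) (by decide),
          iff_of_false (fun hm => absurd (h5.mpr hm) (by intro hv; linarith)) (by decide)]
      rw [e]; simp [code2II]
    · exfalso; linarith
    · exfalso; linarith
    · have e : σ = ({3, 4} : Finset (Fin 6)) := by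
        ext i; fin_cases i
        exacts [iff_of_false (fun hm => absurd (h0.mpr hm) (by intro hv; linarith)) (by decide),
          iff_of_false (fun hm => absurd (h1.mpr hm) (by intro hv; linarith)) (by decide),
          iff_of_false (fun hm => absurd (h2.mpr hm) (by intro hv; linarith)) (by decide),
          iff_of_true (h3.mp (by linarith)) (by decide),
          iff_of_true (h4.mp (by linarith)) (by decide),
          iff_of_false (fun hm => absurd (h5.mpr hm) (by intro hv; linarith)) (by decide)]
      rw [e]; simp [code2II]
    · exfalso; linarith
    · exfalso; linarith
    · have e : σ = ({3, 4, 5} : Finset (Fin 6)) := by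
        ext i; fin_cases i
        exacts [iff_of_false (fun hm => absurd (h0.mpr hm) (by intro hv; linarith)) (by decide),
          iff_of_false (fun hm => absurd (h1.mpr hm) (by intro hv; linarith)) (by decide),
          iff_of_false (fun hm => absurd (h2.mpr hm) (by intro hv; linarith)) (by decide),
          iff_of_true (h3.mp (by linarith)) (by decide),
          iff_of_true (h4.mp (by linarith)) (by decide),
          iff_of_true (h5.mp (by linarith)) (by decide)]
      rw [e]; simp [code2II]
  · intro hσ
    simp only [code2II, Set.mem_insert_iff, Set.mem_singleton_iff] at hσ
    rcases hσ with rfl|rfl|rfl|rfl|rfl|rfl|rfl|rfl|rfl|rfl|rfl|rfl|rfl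
    · exact ⟨pt 1 1, by intro i; fin_cases i <;> simp [Uo, pt] <;> norm_num⟩
    · exact ⟨pt 2 (-1), by intro i; fin_cases i <;> simp [Uo, pt] <;> norm_num⟩
    · exact ⟨pt 1 (-2), by intro i; fin_cases i <;> simp [Uo, pt] <;> norm_num⟩
    · exact ⟨pt (-1) 2, by intro i; fin_cases i <;> simp [Uo, pt] <;> norm_num⟩
    · exact ⟨pt (-2) 1, by intro i; fin_cases i <;> simp [Uo, pt] <;> norm_num⟩
    · exact ⟨pt (-1) (-1), by intro i; fin_cases i <;> simp [Uo, pt] <;> norm_num⟩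
    · exact ⟨pt 1 0, by intro i; fin_cases i <;> simp [Uo, pt] <;> norm_num⟩
    · exact ⟨pt 1 (-1), by intro i; fin_cases i <;> simp [Uo, pt] <;> norm_num⟩
    · exact ⟨pt 0 1, by intro i; fin_cases i <;> simp [Uo, pt] <;> norm_num⟩
    · exact ⟨pt (-1) 1, by intro i; fin_cases i <;> simp [Uo, pt] <;> norm_num⟩
    · exact ⟨pt (-1) 0, by intro i; fin_cases i <;> simp [Uo, pt] <;> norm_num⟩
    · exact ⟨pt 0 (-1), by intro i; fin_cases i <;> simp [Uo, pt] <;> norm_num⟩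
    · exact ⟨pt 0 0, by intro i; fin_cases i <;> simp [Uo, pt] <;> norm_num⟩

lemma euc1_ext {a b : Euc 1} (h : a 0 = b 0) : a = b := by
  ext i
  rw [Fin.eq_zero i]
  exact h

lemma between_mem {s : Set (Euc 1)} (hs : Convex ℝ s) {a b c : Euc 1}
    (ha : a ∈ s) (hb : b ∈ s) (h1 : a 0 ≤ c 0) (h2 : c 0 ≤ b 0) : c ∈ s := by
  rcases eq_or_lt_of_le (h1.trans h2) with he|hlt
  · have h3 : a 0 = c 0 := le_antisymm h1 (by rw [he]; exact h2)
    rw [← euc1_ext h3]; exact ha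
  · set t := (c 0 - a 0) / (b 0 - a 0) with htdef
    have hb0 : 0 < b 0 - a 0 := by linarith
    have ht0 : 0 ≤ t := div_nonneg (by linarith) hb0.le
    have ht1 : t ≤ 1 := by rw [div_le_one hb0]; linarith
    have hc : c = (1 - t) • a + t • b := by
      apply euc1_ext
      have e : ((1 - t) • a + t • b) 0 = (1 - t) * a 0 + t * b 0 := rfl
      rw [e, htdef]
      have hne : b 0 - a 0 ≠ 0 := ne_of_gt hb0
      field_simp
      ring
    rw [hc]
    exact hs ha hb (by linarith) ht0 (by ring)

lemma tri {U : Set (Euc 1)} (hU : Convex ℝ U) {x y z q : Euc 1}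
    (hx : x ∈ U) (hy : y ∈ U) (hz : z ∈ U) (hq : q ∉ U) :
    (q 0 < x 0 ∧ q 0 < y 0 ∧ q 0 < z 0) ∨ (x 0 < q 0 ∧ y 0 < q 0 ∧ z 0 < q 0) := by
  have hnx : q 0 ≠ x 0 := fun h => hq (by rw [euc1_ext h]; exact hx)
  have hny : q 0 ≠ y 0 := fun h => hq (by rw [euc1_ext h]; exact hy)
  have hnz : q 0 ≠ z 0 := fun h => hq (by rw [euc1_ext h]; exact hz)
  rcases hnx.lt_or_gt with h1|h1 <;> rcases hny.lt_or_gt with h2|h2 <;>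
    rcases hnz.lt_or_gt with h3|h3
  · exact Or.inl ⟨h1, h2, h3⟩
  · exact absurd (between_mem hU hz hx h3.le h1.le) hq
  · exact absurd (between_mem hU hy hx h2.le h1.le) hq
  · exact absurd (between_mem hU hy hx h2.le h1.le) hq
  · exact absurd (between_mem hU hx hy h1.le h2.le) hq
  · exact absurd (between_mem hU hx hy h1.le h2.le) hq
  · exact absurd (between_mem hU hx hz h1.le h3.le) hq
  · exact Or.inr ⟨h1, h2, h3⟩

lemma noOpen1 : ¬ HasOpenReal code2II 1 := by
  rintro ⟨U, hconv, -, hcode⟩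
  have w : ∀ k : Fin 6, ({k, k+1, k+2} : Finset (Fin 6)) ∈ codeOf U := by
    intro k
    rw [hcode]
    fin_cases k <;>
      · simp only [code2II, Set.mem_insert_iff, Set.mem_singleton_iff]
        decide
  choose P hP using fun k => w k
  have mem : ∀ k j : Fin 6, j ∈ ({k, k+1, k+2} : Finset (Fin 6)) → P k ∈ U j :=
    fun k j hj => (hP k j).mpr hj
  have nmem : ∀ k j : Fin 6, j ∉ ({k, k+1, k+2} : Finset (Fin 6)) → P k ∉ U j :=
    fun k j hj hm => hj ((hP k j).mp hm)
  have A0 := tri (hconv 3) (mem 1 3 (by decide)) (mem 2 3 (by decide)) (mem 3 3 (by decide))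
    (nmem 0 3 (by decide))
  have A1 := tri (hconv 4) (mem 2 4 (by decide)) (mem 3 4 (by decide)) (mem 4 4 (by decide))
    (nmem 1 4 (by decide))
  have B1 := tri (hconv 0) (mem 4 0 (by decide)) (mem 5 0 (by decide)) (mem 0 0 (by decide))
    (nmem 1 0 (by decide))
  have A2 := tri (hconv 5) (mem 3 5 (by decide)) (mem 4 5 (by decide)) (mem 5 5 (by decide))
    (nmem 2 5 (by decide))
  have B2 := tri (hconv 1) (mem 5 1 (by decide)) (mem 0 1 (by decide)) (mem 1 1 (by decide))
    (nmem 2 1 (by decide))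
  rcases A0 with ⟨a1,a2,a3⟩|⟨a1,a2,a3⟩ <;>
    rcases A1 with ⟨b1,b2,b3⟩|⟨b1,b2,b3⟩ <;> rcases B1 with ⟨c1,c2,c3⟩|⟨c1,c2,c3⟩ <;>
    rcases A2 with ⟨d1,d2,d3⟩|⟨d1,d2,d3⟩ <;> rcases B2 with ⟨e1,e2,e3⟩|⟨e1,e2,e3⟩ <;>
    linarith

/-- Transitivity-type lemma for segments. -/
lemma seg_trans {E : Type*} [AddCommGroup E] [Module ℝ E] {a b c d : E}
    (h1 : b ∈ segment ℝ a c) (h2 : c ∈ segment ℝ b d) (hbc : b ≠ c) :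
    c ∈ segment ℝ a d := by
  obtain ⟨α, β, hα, hβ, hαβ, hab⟩ := h1
  obtain ⟨γ, δ, hγ, hδ, hγδ, hcd⟩ := h2
  have hδ0 : δ ≠ 0 := by
    rintro rfl
    have hγ1 : γ = 1 := by linarith
    exact hbc (by rw [← hcd, hγ1, one_smul, zero_smul, add_zero])
  have hδpos : 0 < δ := lt_of_le_of_ne hδ (Ne.symm hδ0)
  have hD : 0 < 1 - γ * β := by nlinarith
  have hDne : 1 - γ * β ≠ 0 := ne_of_gt hD
  have key : (1 - γ * β) • c = (γ * α) • a + δ • d := by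
    have h3 : c = (γ * α) • a + (γ * β) • c + δ • d := by
      nth_rewrite 1 [← hcd]
      rw [← hab, smul_add, smul_smul, smul_smul]
    calc (1 - γ * β) • c = c - (γ * β) • c := by rw [sub_smul, one_smul]
      _ = (γ * α) • a + δ • d := by nth_rewrite 1 [h3]; abel
  refine ⟨γ * α / (1 - γ * β), δ / (1 - γ * β),
    div_nonneg (mul_nonneg hγ hα) hD.le, div_nonneg hδ hD.le, ?_, ?_⟩
  · field_simp
    nlinarith
  · rw [div_eq_inv_mul, div_eq_inv_mul,
      mul_smul ((1 - γ * β)⁻¹) (γ * α) a, mul_smul ((1 - γ * β)⁻¹) δ d,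
      ← smul_add, ← key, smul_smul, inv_mul_cancel₀ hDne, one_smul]

lemma noClosed (d : ℕ) : ¬ HasClosedReal code2II d := by
  classical
  rintro ⟨X, hconv, hcl, hcode⟩
  have hpat : ∀ p : Euc d, ∃ σ ∈ code2II, ∀ i, p ∈ X i ↔ i ∈ σ := by
    intro p
    refine ⟨Finset.univ.filter (fun i => p ∈ X i), ?_, ?_⟩
    · rw [← hcode]; exact ⟨p, fun i => by simp⟩
    · intro i; simp
  have fact1 : ∀ σ ∈ code2II, ∀ i : Fin 6, i ∈ σ → i + 2 ∈ σ →
      σ = ({i, i + 1, i + 2} : Finset (Fin 6)) := by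
    intro σ hσ
    simp only [code2II, Set.mem_insert_iff, Set.mem_singleton_iff] at hσ
    rcases hσ with rfl|rfl|rfl|rfl|rfl|rfl|rfl|rfl|rfl|rfl|rfl|rfl|rfl <;> decide
  have fact2 : ∀ σ ∈ code2II, ∀ i : Fin 6, i + 1 ∈ σ → i ∈ σ ∨ i + 2 ∈ σ := by
    intro σ hσ
    simp only [code2II, Set.mem_insert_iff, Set.mem_singleton_iff] at hσ
    rcases hσ with rfl|rfl|rfl|rfl|rfl|rfl|rfl|rfl|rfl|rfl|rfl|rfl|rfl <;> decide
  set W : Fin 6 → Set (Euc d) := fun i => X i ∩ X (i + 2) with hWdef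
  have hWmem : ∀ (i : Fin 6) (p : Euc d), p ∈ W i →
      ∀ j, (p ∈ X j ↔ j ∈ ({i, i + 1, i + 2} : Finset (Fin 6))) := by
    intro i p hp j
    obtain ⟨σ, hσC, hσ⟩ := hpat p
    have := fact1 σ hσC i ((hσ i).mp hp.1) ((hσ (i + 2)).mp hp.2)
    rw [hσ j, this]
  have hWdisj : ∀ i j : Fin 6, i ≠ j → ∀ p : Euc d, p ∈ W i → p ∈ W j → False := by
    intro i j hij p hpi hpj
    have h1 := hWmem i p hpi
    have h2 := hWmem j p hpj
    have heq : ({i, i + 1, i + 2} : Finset (Fin 6)) = {j, j + 1, j + 2} :=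
      Finset.ext fun k => (h1 k).symm.trans (h2 k)
    revert heq
    fin_cases i <;> fin_cases j <;> first | (exact fun _ => hij rfl) | decide
  -- witnesses
  have hWit : ∀ i : Fin 6, ∃ p : Euc d, p ∈ W i := by
    intro i
    have hTmem : ({i, i + 1, i + 2} : Finset (Fin 6)) ∈ codeOf X := by
      rw [hcode]
      fin_cases i <;>
        · simp only [code2II, Set.mem_insert_iff, Set.mem_singleton_iff]
          decide
    obtain ⟨p, hp⟩ := hTmem
    refine ⟨p, (hp i).mpr (Finset.mem_insert_self _ _), (hp (i + 2)).mpr ?_⟩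
    exact Finset.mem_insert.mpr (Or.inr (Finset.mem_insert.mpr
      (Or.inr (Finset.mem_singleton_self _))))
  have hWclosed : ∀ i, IsClosed (W i) := fun i => (hcl i).inter (hcl (i + 2))
  -- blocking
  have block : ∀ (i0 : Fin 6) (u v : Euc d), u ∈ W i0 → v ∈ W (i0 + 2) →
      ∃ m ∈ segment ℝ u v, m ∈ W (i0 + 1) := by
    intro i0 u v hu hv
    have e1 : i0 + 2 + 1 = i0 + 3 := by rw [add_assoc]; rfl
    have e2 : i0 + 2 + 2 = i0 + 4 := by rw [add_assoc]; rfl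
    have e3 : i0 + 1 + 1 = i0 + 2 := by rw [add_assoc]; rfl
    have e4 : i0 + 1 + 2 = i0 + 3 := by rw [add_assoc]; rfl
    have huX2 : u ∈ X (i0 + 2) := hu.2
    have huX1 : u ∈ X (i0 + 1) := (hWmem i0 u hu (i0 + 1)).mpr
      (Finset.mem_insert.mpr (Or.inr (Finset.mem_insert_self _ _)))
    have hvX2 : v ∈ X (i0 + 2) := hv.1
    have hvX3 : v ∈ X (i0 + 3) := (hWmem (i0 + 2) v hv (i0 + 3)).mpr
      (Finset.mem_insert.mpr (Or.inr (Finset.mem_insert.mpr (Or.inl e1.symm))))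
    have hseg : segment ℝ u v ⊆ X (i0 + 2) := (hconv (i0 + 2)).segment_subset huX2 hvX2
    have hcover : segment ℝ u v ⊆ X (i0 + 1) ∪ X (i0 + 3) := by
      intro m hm
      obtain ⟨σ, hσC, hσ⟩ := hpat m
      have hm2 : (i0 + 1) + 1 ∈ σ := by rw [e3]; exact (hσ (i0 + 2)).mp (hseg hm)
      rcases fact2 σ hσC (i0 + 1) hm2 with h | h
      · exact Or.inl ((hσ (i0 + 1)).mpr h)
      · rw [e4] at h
        exact Or.inr ((hσ (i0 + 3)).mpr h)
    have hpre : IsPreconnected (segment ℝ u v) := (convex_segment u v).isPreconnected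
    have hne1 : (segment ℝ u v ∩ X (i0 + 1)).Nonempty := ⟨u, left_mem_segment ℝ u v, huX1⟩
    have hne2 : (segment ℝ u v ∩ X (i0 + 3)).Nonempty := ⟨v, right_mem_segment ℝ u v, hvX3⟩
    obtain ⟨m, hmseg, hm1, hm3⟩ := isPreconnected_closed_iff.mp hpre (X (i0 + 1)) (X (i0 + 3))
      (hcl _) (hcl _) hcover hne1 hne2
    refine ⟨m, hmseg, hm1, ?_⟩
    show m ∈ X (i0 + 1 + 2)
    rw [e4]; exact hm3
  -- minimization setup
  choose p hpW using hWit
  set K : Set (Euc d) := convexHull ℝ (Set.range p) with hKdef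
  have hKcompact : IsCompact K := (Set.finite_range p).isCompact_convexHull (𝕜 := ℝ)
  have hKconv : Convex ℝ K := convex_convexHull ℝ _
  have hpK : ∀ i, p i ∈ K := fun i => subset_convexHull ℝ _ (Set.mem_range_self i)
  set S : Set (Fin 6 → Euc d) := Set.univ.pi (fun j => K ∩ W j) with hSdef
  have hScompact : IsCompact S := isCompact_univ_pi fun j => hKcompact.inter_right (hWclosed j)
  have hSne : S.Nonempty := ⟨p, fun j _ => ⟨hpK j, hpW j⟩⟩
  set P : (Fin 6 → Euc d) → ℝ := fun y => ∑ j : Fin 6, dist (y j) (y (j + 1)) with hPdef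
  have hPcont : Continuous P := by
    apply continuous_finset_sum
    intro j _
    exact Continuous.dist (continuous_apply j) (continuous_apply (j + 1))
  obtain ⟨y, hyS, hymin⟩ := hScompact.exists_isMinOn hSne hPcont.continuousOn
  have hyW : ∀ j, y j ∈ W j := fun j => (hyS j (Set.mem_univ j)).2
  have hyK : ∀ j, y j ∈ K := fun j => (hyS j (Set.mem_univ j)).1
  -- minimality forces betweenness
  have key : ∀ i0 : Fin 6, y (i0 + 1) ∈ segment ℝ (y i0) (y (i0 + 2)) := by
    intro i0
    by_contra hns
    obtain ⟨m, hmseg, hmW⟩ := block i0 (y i0) (y (i0 + 2)) (hyW i0) (hyW (i0 + 2))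
    have hmK : m ∈ K := hKconv.segment_subset (hyK i0) (hyK (i0 + 2)) hmseg
    set z : Fin 6 → Euc d := Function.update y (i0 + 1) m with hzdef
    have hzS : z ∈ S := by
      intro i _
      rcases eq_or_ne i (i0 + 1) with rfl | hne
      · rw [hzdef]; simp only [Function.update_self]; exact ⟨hmK, hmW⟩
      · rw [hzdef]; simp only [Function.update_of_ne hne]; exact ⟨hyK i, hyW i⟩
    -- sum decomposition
    have hne1 : ∀ x : Fin 6, x + 1 ≠ x := by decide
    have hne2 : ∀ x : Fin 6, x + 2 ≠ x + 1 := by decide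
    have e3 : i0 + 1 + 1 = i0 + 2 := by rw [add_assoc]; rfl
    have hsplit : ∀ w : Fin 6 → Euc d, P w = dist (w i0) (w (i0 + 1)) +
        dist (w (i0 + 1)) (w (i0 + 2)) +
        ∑ i ∈ (Finset.univ.erase i0).erase (i0 + 1), dist (w i) (w (i + 1)) := by
      intro w
      simp only [hPdef]
      rw [← Finset.add_sum_erase _ _ (Finset.mem_univ i0),
        ← Finset.add_sum_erase _ _
          (Finset.mem_erase.mpr ⟨hne1 i0, Finset.mem_univ (i0 + 1)⟩), e3]
      ring
    have htail : ∀ i ∈ (Finset.univ.erase i0).erase (i0 + 1),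
        dist (z i) (z (i + 1)) = dist (y i) (y (i + 1)) := by
      intro i hi
      obtain ⟨hi1, hi'⟩ := Finset.mem_erase.mp hi
      obtain ⟨hi0, -⟩ := Finset.mem_erase.mp hi'
      rw [hzdef]
      rw [Function.update_of_ne hi1, Function.update_of_ne
        (show i + 1 ≠ i0 + 1 from fun h => hi0 (add_right_cancel h))]
    have hz0 : z i0 = y i0 := Function.update_of_ne (fun h => hne1 i0 h.symm) _ _
    have hz1 : z (i0 + 1) = m := Function.update_self _ _ _
    have hz2 : z (i0 + 2) = y (i0 + 2) := Function.update_of_ne (hne2 i0) _ _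
    have hPz : P z = dist (y i0) m + dist m (y (i0 + 2)) +
        ∑ i ∈ (Finset.univ.erase i0).erase (i0 + 1), dist (y i) (y (i + 1)) := by
      rw [hsplit z, hz0, hz1, hz2, Finset.sum_congr rfl htail]
    have hPy : P y = dist (y i0) (y (i0 + 1)) + dist (y (i0 + 1)) (y (i0 + 2)) +
        ∑ i ∈ (Finset.univ.erase i0).erase (i0 + 1), dist (y i) (y (i + 1)) := hsplit y
    have hmdist : dist (y i0) m + dist m (y (i0 + 2)) = dist (y i0) (y (i0 + 2)) :=
      dist_add_dist_of_mem_segment hmseg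
    have hstrict : dist (y i0) (y (i0 + 2)) <
        dist (y i0) (y (i0 + 1)) + dist (y (i0 + 1)) (y (i0 + 2)) := by
      refine lt_of_le_of_ne (dist_triangle _ _ _) (fun heq => hns ?_)
      exact mem_segment_iff_wbtw.mpr (dist_add_dist_eq_iff.mp heq.symm)
    have hlt : P z < P y := by rw [hPz, hPy]; linarith
    have := isMinOn_iff.mp hymin z hzS
    linarith
  -- cyclic betweenness is impossible
  have hney : ∀ i j : Fin 6, i ≠ j → y i ≠ y j :=
    fun i j hij he => hWdisj i j hij (y i) (hyW i) (he ▸ hyW j)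
  have b1 : y 1 ∈ segment ℝ (y 0) (y 2) := key 0
  have b2 : y 2 ∈ segment ℝ (y 1) (y 3) := key 1
  have b3 : y 3 ∈ segment ℝ (y 2) (y 4) := key 2
  have b4 : y 4 ∈ segment ℝ (y 3) (y 5) := key 3
  have b5 : y 5 ∈ segment ℝ (y 4) (y 0) := key 4
  have t1 : y 2 ∈ segment ℝ (y 0) (y 3) := seg_trans b1 b2 (hney 1 2 (by decide))
  have t2 : y 3 ∈ segment ℝ (y 0) (y 4) := seg_trans t1 b3 (hney 2 3 (by decide))
  have t3 : y 4 ∈ segment ℝ (y 0) (y 5) := seg_trans t2 b4 (hney 3 4 (by decide))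
  have t4 : y 5 ∈ segment ℝ (y 0) (y 0) := seg_trans t3 b5 (hney 4 5 (by decide))
  rw [segment_same] at t4
  exact hney 5 0 (by decide) t4
/-- `C_{(2,∞,∞)}` has embedding dimension vector `(2, ∞, ∞)`. -/
theorem code2II_embedding_dimensions :
    HasOpenReal code2II 2 ∧
    ¬ HasOpenReal code2II 1 ∧
    (∀ d : ℕ, ¬ HasClosedReal code2II d) ∧
    (∀ d : ℕ, ¬ HasNondegReal code2II d) := by
  refine ⟨hasOpen2, noOpen1, noClosed, ?_⟩
  intro d h
  rcases h with ⟨U, hOpen, hcodecl⟩ | ⟨X, hX, -⟩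
  · exact noClosed d ⟨fun i => closure (U i),
      fun i => (hOpen.1 i).closure, fun i => isClosed_closure, hcodecl⟩
  · exact noClosed d ⟨X, hX⟩

end
end
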